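/- arXiv:1904.12917 — 10 statements merged into one kernel-verified Lean document; each statement's English description precedes it below -/
import Mathlib

section
/- If ε : Q → G is an augmented quandle, then the induced map ∂_Q : Adj Q → G, defined on generators by e_q ↦ ε(q), together with the G-action on Adj Q induced by (e_q)^g = e_{q^g}, is a G-crossed module. -/
/-- The relations of the adjoint group of an augmented quandle `ε : Q → G`
with right `G`-action `act`: `e_p e_q = e_q e_{p^{ε q}}`. -/
def adjointRels {Q : Type*} {G : Type*} [Group G] (act : Q → G → Q) (ε : Q → G) :
    Set (FreeGroup Q) :=
  {x | ∃ p q : Q,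
    x = FreeGroup.of p * FreeGroup.of q * (FreeGroup.of q * FreeGroup.of (act p (ε q)))⁻¹}

private lemma pg_induction {α : Type*} {rels : Set (FreeGroup α)}
    (C : PresentedGroup rels → Prop) (h1 : C 1) (hof : ∀ q, C (PresentedGroup.of q))
    (hinv : ∀ x, C x → C x⁻¹) (hmul : ∀ x y, C x → C y → C (x * y)) :
    ∀ x, C x := by
  intro x
  induction x using QuotientGroup.induction_on with
  | H z =>
    induction z using FreeGroup.induction_on with
    | C1 => exact h1
    | of q => exact hof q
    | inv_of q _ => exact hinv _ (hof q)
    | mul a b ha hb => exact hmul _ _ ha hb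

private lemma pg_rel {Q G : Type*} [Group G] (act : Q → G → Q) (ε : Q → G) (p q : Q) :
    (PresentedGroup.of p * PresentedGroup.of q : PresentedGroup (adjointRels act ε)) =
      PresentedGroup.of q * PresentedGroup.of (act p (ε q)) := by
  have hmem : (FreeGroup.of p * FreeGroup.of q *
      (FreeGroup.of q * FreeGroup.of (act p (ε q)))⁻¹ : FreeGroup Q) ∈
      Subgroup.normalClosure (adjointRels act ε) :=
    Subgroup.subset_normalClosure ⟨p, q, rfl⟩
  have h1 : (QuotientGroup.mk (FreeGroup.of p * FreeGroup.of q *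
      (FreeGroup.of q * FreeGroup.of (act p (ε q)))⁻¹) :
      PresentedGroup (adjointRels act ε)) = 1 :=
    (QuotientGroup.eq_one_iff _).mpr hmem
  have h2 : (PresentedGroup.of p * PresentedGroup.of q : PresentedGroup (adjointRels act ε)) *
      (PresentedGroup.of q * PresentedGroup.of (act p (ε q)))⁻¹ = 1 := h1
  exact mul_inv_eq_one.mp h2

/-- If `ε : Q → G` is an augmented quandle, then the induced map `δ_Q : Adj Q → G`,
`e_q ↦ ε q`, together with the `G`-action induced by `(e_q)^g = e_{q^g}`, is a
`G`-crossed module. -/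
theorem adjoint_group_is_crossed_module {Q G : Type*} [Group G]
    (act : Q → G → Q) (ε : Q → G)
    (act_one : ∀ q : Q, act q 1 = q)
    (act_comp : ∀ (q : Q) (g h : G), act q (g * h) = act (act q g) h)
    (aq1 : ∀ (q : Q) (g : G), ε (act q g) = g⁻¹ * ε q * g)
    (aq2 : ∀ q : Q, act q (ε q) = q) :
    ∃ (δ : PresentedGroup (adjointRels act ε) →* G)
      (A : PresentedGroup (adjointRels act ε) → G → PresentedGroup (adjointRels act ε)),
      (∀ q : Q, δ (PresentedGroup.of q) = ε q) ∧
      (∀ (q : Q) (g : G), A (PresentedGroup.of q) g = PresentedGroup.of (act q g)) ∧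
      (∀ (g : G) (x y : PresentedGroup (adjointRels act ε)), A (x * y) g = A x g * A y g) ∧
      (∀ x, A x 1 = x) ∧
      (∀ (x : PresentedGroup (adjointRels act ε)) (g h : G), A x (g * h) = A (A x g) h) ∧
      (∀ (x : PresentedGroup (adjointRels act ε)) (g : G), δ (A x g) = g⁻¹ * δ x * g) ∧
      (∀ a c : PresentedGroup (adjointRels act ε), c * a = a * A c (δ a)) := by
  -- the boundary map δ
  have hδrels : ∀ r ∈ adjointRels act ε, FreeGroup.lift ε r = 1 := by
    rintro r ⟨p, q, rfl⟩
    simp only [map_mul, map_inv, FreeGroup.lift_apply_of, aq1]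
    group
  set δ : PresentedGroup (adjointRels act ε) →* G := PresentedGroup.toGroup hδrels with hδ
  -- the action homomorphisms
  have hArels : ∀ g : G, ∀ r ∈ adjointRels act ε,
      FreeGroup.lift (fun q => (PresentedGroup.of (act q g) :
        PresentedGroup (adjointRels act ε))) r = 1 := by
    rintro g r ⟨p, q, rfl⟩
    simp only [map_mul, map_inv, FreeGroup.lift_apply_of]
    rw [mul_inv_eq_one]
    have := pg_rel act ε (act p g) (act q g)
    rw [this]
    congr 2
    rw [aq1, ← act_comp, ← act_comp]
    congr 1
    group
  set Ah : G → (PresentedGroup (adjointRels act ε) →* PresentedGroup (adjointRels act ε)) :=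
    fun g => PresentedGroup.toGroup (hArels g) with hAh
  set A : PresentedGroup (adjointRels act ε) → G → PresentedGroup (adjointRels act ε) :=
    fun x g => Ah g x with hA
  have hAof : ∀ (q : Q) (g : G), A (PresentedGroup.of q) g = PresentedGroup.of (act q g) :=
    fun q g => PresentedGroup.toGroup.of (hArels g)
  have hδof : ∀ q : Q, δ (PresentedGroup.of q) = ε q := fun q => PresentedGroup.toGroup.of hδrels
  refine ⟨δ, A, hδof, hAof, fun g x y => map_mul (Ah g) x y, ?_, ?_, ?_, ?_⟩
  · -- A x 1 = x
    have : Ah 1 = MonoidHom.id _ := by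
      ext q
      show A (PresentedGroup.of q) 1 = PresentedGroup.of q
      rw [hAof, act_one]
    intro x
    show Ah 1 x = x
    rw [this]; rfl
  · -- A x (g * h) = A (A x g) h
    intro x g h
    have : Ah (g * h) = (Ah h).comp (Ah g) := by
      ext q
      show A (PresentedGroup.of q) (g * h) = A (A (PresentedGroup.of q) g) h
      rw [hAof, hAof, hAof, act_comp]
    show Ah (g * h) x = Ah h (Ah g x)
    rw [this]; rfl
  · -- δ (A x g) = g⁻¹ δ x g
    intro x g
    have : δ.comp (Ah g) = ((MulEquiv.toMonoidHom (MulAut.conj g⁻¹))).comp δ := by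
      ext q
      show δ (A (PresentedGroup.of q) g) = (MulAut.conj g⁻¹) (δ (PresentedGroup.of q))
      rw [hAof, hδof, hδof, aq1]
      simp [MulAut.conj]
    have := DFunLike.congr_fun this x
    simpa [MulAut.conj] using this
  · -- Peiffer: c * a = a * A c (δ a)
    intro a
    induction a using pg_induction with
    | h1 =>
      intro c
      have h0 : A c (δ (1 : PresentedGroup (adjointRels act ε))) = c := by
        rw [map_one δ]
        show Ah 1 c = c
        have : Ah 1 = MonoidHom.id _ := by
          ext q
          show A (PresentedGroup.of q) 1 = PresentedGroup.of q
          rw [hAof, act_one]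
        rw [this]; rfl
      rw [h0, mul_one, one_mul]
    | hof p =>
      intro c
      rw [hδof]
      induction c using pg_induction with
      | h1 =>
        rw [show A 1 (ε p) = 1 from map_one (Ah (ε p))]
        rw [mul_one, one_mul]
      | hof q =>
        rw [hAof]
        exact pg_rel act ε q p
      | hinv x hx =>
        have h := hx
        show x⁻¹ * PresentedGroup.of p = PresentedGroup.of p * Ah (ε p) x⁻¹
        rw [map_inv]
        have : PresentedGroup.of p = x * PresentedGroup.of p * (Ah (ε p) x)⁻¹ := by
          rw [h]; exact (mul_inv_cancel_right _ _).symm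
        calc x⁻¹ * PresentedGroup.of p
            = x⁻¹ * (x * PresentedGroup.of p * (Ah (ε p) x)⁻¹) := by rw [← this]
          _ = PresentedGroup.of p * (Ah (ε p) x)⁻¹ := by group
      | hmul x y hx hy =>
        show x * y * PresentedGroup.of p = PresentedGroup.of p * Ah (ε p) (x * y)
        rw [map_mul]
        calc x * y * PresentedGroup.of p
            = x * (PresentedGroup.of p * Ah (ε p) y) := by rw [mul_assoc, hy]
          _ = (x * PresentedGroup.of p) * Ah (ε p) y := by rw [mul_assoc]
          _ = PresentedGroup.of p * Ah (ε p) x * Ah (ε p) y := by rw [hx]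
          _ = PresentedGroup.of p * (Ah (ε p) x * Ah (ε p) y) := by rw [mul_assoc]
    | hinv a ha =>
      intro c
      have h := ha (A c (δ a⁻¹))
      have hcomp : ∀ (x : PresentedGroup (adjointRels act ε)) (g h : G),
          A (A x g) h = A x (g * h) := by
        intro x g h
        have : Ah (g * h) = (Ah h).comp (Ah g) := by
          ext q
          show A (PresentedGroup.of q) (g * h) = A (A (PresentedGroup.of q) g) h
          rw [hAof, hAof, hAof, act_comp]
        show Ah h (Ah g x) = Ah (g * h) x
        rw [this]; rfl
      have hone : ∀ x, A x 1 = x := by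
        intro x
        have : Ah 1 = MonoidHom.id _ := by
          ext q
          show A (PresentedGroup.of q) 1 = PresentedGroup.of q
          rw [hAof, act_one]
        show Ah 1 x = x
        rw [this]; rfl
      rw [hcomp] at h
      rw [map_inv δ] at h ⊢
      rw [inv_mul_cancel] at h
      rw [hone] at h
      -- h : A c (δ a)⁻¹ * a = a * c
      have h2 : a⁻¹ * A c (δ a)⁻¹ = c * a⁻¹ := by
        have := congrArg (fun z => a⁻¹ * z * a⁻¹) h
        simpa [mul_assoc] using this
      exact h2.symm
    | hmul a b ha hb =>
      intro c
      have hcomp : ∀ (x : PresentedGroup (adjointRels act ε)) (g h : G),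
          A (A x g) h = A x (g * h) := by
        intro x g h
        have : Ah (g * h) = (Ah h).comp (Ah g) := by
          ext q
          show A (PresentedGroup.of q) (g * h) = A (A (PresentedGroup.of q) g) h
          rw [hAof, hAof, hAof, act_comp]
        show Ah h (Ah g x) = Ah (g * h) x
        rw [this]; rfl
      calc c * (a * b) = (c * a) * b := by rw [mul_assoc]
        _ = a * A c (δ a) * b := by rw [ha]
        _ = a * (A c (δ a) * b) := by rw [mul_assoc]
        _ = a * (b * A (A c (δ a)) (δ b)) := by rw [hb]
        _ = a * b * A c (δ a * δ b) := by rw [hcomp, mul_assoc]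
        _ = a * b * A c (δ (a * b)) := by rw [map_mul]
end

section
/- If v and w are tuples of elements of a group G and the product of the entries of v equals the identity (ev(v) = 1), then the concatenations v·w and w·v are braid equivalent, i.e., lie in the same orbit under the Hurwitz action of the braid group. -/
/-- An elementary Hurwitz move on tuples of elements of `G`:
`(…, a, b, …) ↦ (…, b, b⁻¹ a b, …)`. -/
def HurwitzMove {G : Type*} [Group G] (v w : List G) : Prop :=
  ∃ (x y : List G) (a b : G), v = x ++ a :: b :: y ∧ w = x ++ b :: (b⁻¹ * a * b) :: y

/-- Braid equivalence: same orbit under the Hurwitz action of the braid group. -/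
def BraidEquiv {G : Type*} [Group G] (v w : List G) : Prop :=
  Relation.EqvGen HurwitzMove v w

lemma HurwitzMove.append_left {G : Type*} [Group G] {u u' : List G} (x : List G)
    (h : HurwitzMove u u') : HurwitzMove (x ++ u) (x ++ u') := by
  obtain ⟨p, y, a, b, h1, h2⟩ := h
  exact ⟨x ++ p, y, a, b, by simp [h1], by simp [h2]⟩

lemma BraidEquiv.append_left {G : Type*} [Group G] {u u' : List G} (x : List G)
    (h : BraidEquiv u u') : BraidEquiv (x ++ u) (x ++ u') := by
  induction h with
  | rel a b hab => exact Relation.EqvGen.rel _ _ (hab.append_left x)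
  | refl a => exact Relation.EqvGen.refl _
  | symm a b _ ih => exact ih.symm _ _
  | trans a b c _ _ ih1 ih2 => exact ih1.trans _ _ _ ih2

/-- Slide one element left across `v`, conjugating it by `ev v`. -/
lemma slide_left {G : Type*} [Group G] (v : List G) (q : G) (rest : List G) :
    BraidEquiv (v ++ q :: rest) ((v.prod * q * v.prod⁻¹) :: (v ++ rest)) := by
  induction v with
  | nil => simp [BraidEquiv]; exact Relation.EqvGen.refl _
  | cons a v ih =>
    have step1 : BraidEquiv (a :: (v ++ q :: rest))
        (a :: ((v.prod * q * v.prod⁻¹) :: (v ++ rest))) :=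
      BraidEquiv.append_left [a] ih
    have step2 : HurwitzMove
        (((a :: v).prod * q * (a :: v).prod⁻¹) :: (a :: (v ++ rest)))
        (a :: ((v.prod * q * v.prod⁻¹) :: (v ++ rest))) := by
      refine ⟨[], v ++ rest, (a :: v).prod * q * (a :: v).prod⁻¹, a, rfl, ?_⟩
      simp [mul_assoc]
    exact step1.trans _ _ _ ((Relation.EqvGen.rel _ _ step2).symm _ _)

/-- If `ev(v) = 1`, then the concatenations `v ++ w` and `w ++ v` are braid equivalent. -/
theorem append_braid_comm_of_eval_one {G : Type*} [Group G] (v w : List G)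
    (hv : v.prod = 1) : BraidEquiv (v ++ w) (w ++ v) := by
  induction w with
  | nil => simp; exact Relation.EqvGen.refl _
  | cons q w ih =>
    have h1 := slide_left v q w
    rw [hv] at h1
    simp at h1
    exact h1.trans _ _ _ (BraidEquiv.append_left [q] ih)
end

section
/- In the Hurwitz class monoid H_G of a finite group G, every element has a central power: for any tuple v, the class of v^{ord(ev(v))} commutes with the class of every tuple w, where ord(ev(v)) is the order of the product of entries of v in G. -/
namespace BraidAux

variable {G : Type*} [Group G]

theorem refl (u : List G) : BraidEquiv u u := Relation.EqvGen.refl u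

theorem trans {u v w : List G} (h1 : BraidEquiv u v) (h2 : BraidEquiv v w) :
    BraidEquiv u w := Relation.EqvGen.trans _ _ _ h1 h2

theorem symm {u v : List G} (h : BraidEquiv u v) : BraidEquiv v u :=
  Relation.EqvGen.symm _ _ h

theorem cons_congr (a : G) {u w : List G} (h : BraidEquiv u w) :
    BraidEquiv (a :: u) (a :: w) := by
  induction h with
  | rel x y hxy =>
      obtain ⟨s, t, c, d, hx, hy⟩ := hxy
      exact Relation.EqvGen.rel _ _ ⟨a :: s, t, c, d, by simp [hx], by simp [hy]⟩
  | refl x => exact Relation.EqvGen.refl _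
  | symm x y _ ih => exact Relation.EqvGen.symm _ _ ih
  | trans x y z _ _ ih1 ih2 => exact Relation.EqvGen.trans _ _ _ ih1 ih2

/-- Move one element left across a list, conjugating the list. -/
theorem move_one (u : List G) (g : G) (y : List G) :
    BraidEquiv (u ++ g :: y) (g :: (u.map fun a => g⁻¹ * a * g) ++ y) := by
  induction u with
  | nil => exact refl _
  | cons a u ih =>
      refine trans (cons_congr a ih) ?_
      have : HurwitzMove (a :: g :: ((u.map fun a => g⁻¹ * a * g) ++ y))
          (g :: (g⁻¹ * a * g) :: ((u.map fun a => g⁻¹ * a * g) ++ y)) :=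
        ⟨[], _, a, g, rfl, rfl⟩
      exact Relation.EqvGen.rel _ _ this

/-- Move a whole list `w` left across `u`, conjugating `u` by `w.prod`. -/
theorem move_list (u w : List G) :
    BraidEquiv (u ++ w) (w ++ u.map fun a => w.prod⁻¹ * a * w.prod) := by
  induction w generalizing u with
  | nil => simpa using refl u
  | cons g w ih =>
      refine trans (by simpa using move_one u g w) ?_
      refine trans (cons_congr g (ih (u.map fun a => g⁻¹ * a * g))) ?_
      have : ((u.map fun a => g⁻¹ * a * g).map fun a => w.prod⁻¹ * a * w.prod)
          = u.map fun a => (g :: w).prod⁻¹ * a * (g :: w).prod := by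
        rw [List.map_map]
        refine List.map_congr_left fun a _ => ?_
        simp [mul_assoc]
      rw [this]
      exact refl _

end BraidAux

/-- In the Hurwitz class monoid of a finite group `G`, every element has a central power:
the class of `v^{ord(ev v)}` commutes with the class of every tuple `w`. -/
theorem hurwitz_central_power {G : Type*} [Group G] [Fintype G] (v w : List G) :
    BraidEquiv ((List.replicate (orderOf v.prod) v).flatten ++ w)
      (w ++ (List.replicate (orderOf v.prod) v).flatten) := by
  set V := (List.replicate (orderOf v.prod) v).flatten with hV
  have hprod : V.prod = 1 := by
    rw [hV, List.prod_flatten, List.map_replicate, List.prod_replicate,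
      pow_orderOf_eq_one]
  have := BraidAux.move_list w V
  rw [hprod] at this
  simpa using BraidAux.symm this
end

section
/- Let G be a finite group with elements g₁, g₂ conjugate in G, both of order n, and let v ∈ G^d be a tuple whose entries generate G. Then the tuples v·(g₁,…,g₁) and v·(g₂,…,g₂) (each appending n copies) are braid equivalent under the Hurwitz action. -/
namespace CPAux

variable {G : Type*} [Group G]

theorem be_refl (v : List G) : BraidEquiv v v := Relation.EqvGen.refl v

theorem be_symm {v w : List G} (h : BraidEquiv v w) : BraidEquiv w v :=
  Relation.EqvGen.symm _ _ h

theorem be_trans {u v w : List G} (h : BraidEquiv u v) (h' : BraidEquiv v w) :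
    BraidEquiv u w := Relation.EqvGen.trans _ _ _ h h'

theorem be_of_move {v w : List G} (h : HurwitzMove v w) : BraidEquiv v w :=
  Relation.EqvGen.rel _ _ h

theorem hm_prepend (p : List G) {v w : List G} (h : HurwitzMove v w) :
    HurwitzMove (p ++ v) (p ++ w) := by
  obtain ⟨x, y, a, b, rfl, rfl⟩ := h
  exact ⟨p ++ x, y, a, b, by simp, by simp⟩

theorem hm_append (t : List G) {v w : List G} (h : HurwitzMove v w) :
    HurwitzMove (v ++ t) (w ++ t) := by
  obtain ⟨x, y, a, b, rfl, rfl⟩ := h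
  exact ⟨x, y ++ t, a, b, by simp, by simp⟩

theorem be_prepend (p : List G) {v w : List G} (h : BraidEquiv v w) :
    BraidEquiv (p ++ v) (p ++ w) := by
  induction h with
  | rel _ _ h => exact be_of_move (hm_prepend p h)
  | refl _ => exact be_refl _
  | symm _ _ _ ih => exact be_symm ih
  | trans _ _ _ _ _ ih1 ih2 => exact be_trans ih1 ih2

theorem be_append (t : List G) {v w : List G} (h : BraidEquiv v w) :
    BraidEquiv (v ++ t) (w ++ t) := by
  induction h with
  | rel _ _ h => exact be_of_move (hm_append t h)
  | refl _ => exact be_refl _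
  | symm _ _ _ ih => exact be_symm ih
  | trans _ _ _ _ _ ih1 ih2 => exact be_trans ih1 ih2

/-- Pushing `a` rightwards through `k` copies of `g`. -/
theorem slideR (g : G) : ∀ (k : ℕ) (a : G),
    BraidEquiv (a :: List.replicate k g) (List.replicate k g ++ [(g ^ k)⁻¹ * a * g ^ k]) := by
  intro k
  induction k with
  | zero => intro a; simp [be_refl]
  | succ k ih =>
    intro a
    have m1 : BraidEquiv (a :: g :: List.replicate k g)
        (g :: (g⁻¹ * a * g) :: List.replicate k g) :=
      be_of_move ⟨[], List.replicate k g, a, g, by simp, by simp⟩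
    have m2 := be_prepend [g] (ih (g⁻¹ * a * g))
    simp only [List.replicate_succ, List.singleton_append] at *
    refine be_trans m1 (be_trans m2 ?_)
    have : (g ^ k)⁻¹ * (g⁻¹ * a * g) * g ^ k = (g ^ (k + 1))⁻¹ * a * g ^ (k + 1) := by
      group
    rw [this]
    exact be_refl _

/-- Pushing `a` leftwards through `k` copies of `g`, conjugating them. -/
theorem slideL (g : G) : ∀ (k : ℕ) (a : G),
    BraidEquiv (List.replicate k g ++ [a]) (a :: List.replicate k (a⁻¹ * g * a)) := by
  intro k
  induction k with
  | zero => intro a; simp [be_refl]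
  | succ k ih =>
    intro a
    have m1 := be_prepend [g] (ih a)
    have m2 : BraidEquiv (g :: a :: List.replicate k (a⁻¹ * g * a))
        (a :: (a⁻¹ * g * a) :: List.replicate k (a⁻¹ * g * a)) :=
      be_of_move ⟨[], List.replicate k (a⁻¹ * g * a), g, a, by simp, by simp⟩
    simp only [List.replicate_succ, List.singleton_append] at *
    exact be_trans m1 m2

theorem blockComm {g : G} {n : ℕ} (hg : g ^ n = 1) (a : G) :
    BraidEquiv (a :: List.replicate n g) (List.replicate n g ++ [a]) := by
  have := slideR g n a
  rwa [hg, inv_one, one_mul, mul_one] at this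

theorem blockCommList {g : G} {n : ℕ} (hg : g ^ n = 1) : ∀ (w : List G),
    BraidEquiv (w ++ List.replicate n g) (List.replicate n g ++ w) := by
  intro w
  induction w with
  | nil => simp [be_refl]
  | cons a w ih =>
    have m1 := be_prepend [a] ih
    have m2 := be_append w (blockComm hg a)
    simp only [List.cons_append, List.singleton_append, List.append_assoc] at *
    exact be_trans m1 (by simpa using m2)

theorem conjOne {g : G} {n : ℕ} (hg : g ^ n = 1) (a : G) :
    BraidEquiv (a :: List.replicate n g) (a :: List.replicate n (a⁻¹ * g * a)) :=
  be_trans (blockComm hg a) (slideL g n a)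

theorem conj_pow_eq_one {g c : G} {n : ℕ} (hg : g ^ n = 1) : (c⁻¹ * g * c) ^ n = 1 := by
  rw [show c⁻¹ * g * c = c⁻¹ * g * c⁻¹⁻¹ by rw [inv_inv], conj_pow, hg]
  group

/-- Conjugating the block by an entry of `v`. -/
theorem conj_entry {g x : G} {n : ℕ} (hg : g ^ n = 1) (v : List G) (hx : x ∈ v) :
    BraidEquiv (v ++ List.replicate n g) (v ++ List.replicate n (x⁻¹ * g * x)) := by
  obtain ⟨u, w, rfl⟩ := List.append_of_mem hx
  have s1 : BraidEquiv ((x :: w) ++ List.replicate n g)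
      ((x :: List.replicate n g) ++ w) := by
    have := be_prepend [x] (blockCommList hg w)
    simpa using this
  have s2 : BraidEquiv ((x :: List.replicate n g) ++ w)
      ((x :: List.replicate n (x⁻¹ * g * x)) ++ w) :=
    be_append w (conjOne hg x)
  have s3 : BraidEquiv ((x :: List.replicate n (x⁻¹ * g * x)) ++ w)
      ((x :: w) ++ List.replicate n (x⁻¹ * g * x)) := by
    have := be_prepend [x] (blockCommList (conj_pow_eq_one (c := x) hg) w)
    simpa using be_symm this
  have := be_trans s1 (be_trans s2 s3)
  have h1 := be_prepend u this
  simpa using h1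

end CPAux

/-- (Conway–Parker) If `g₁, g₂` are conjugate of order `n` in the finite group `G` and `v`
generates `G`, then `v·(g₁,…,g₁)` and `v·(g₂,…,g₂)` (appending `n` copies) are braid
equivalent. -/
theorem conway_parker {G : Type*} [Group G] [Fintype G] {g₁ g₂ : G} {n : ℕ}
    (hconj : IsConj g₁ g₂) (h₁ : orderOf g₁ = n) (h₂ : orderOf g₂ = n)
    (v : List G) (hv : Subgroup.closure {x : G | x ∈ v} = ⊤) :
    BraidEquiv (v ++ List.replicate n g₁) (v ++ List.replicate n g₂) := by
  classical
  open CPAux in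
  -- the set of `c` such that conjugating any block of `n`-torsion elements works
  let H : Subgroup G :=
  { carrier := {c : G | ∀ g : G, g ^ n = 1 →
      BraidEquiv (v ++ List.replicate n g) (v ++ List.replicate n (c⁻¹ * g * c))}
    one_mem' := by
      intro g hg
      simpa using be_refl (v ++ List.replicate n g)
    mul_mem' := by
      intro c d hc hd g hg
      have t1 := hc g hg
      have t2 := hd (c⁻¹ * g * c) (conj_pow_eq_one hg)
      have : d⁻¹ * (c⁻¹ * g * c) * d = (c * d)⁻¹ * g * (c * d) := by group
      rw [this] at t2
      exact be_trans t1 t2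
    inv_mem' := by
      intro c hc g hg
      have t := hc (c * g * c⁻¹) (by
        have : c * g * c⁻¹ = c⁻¹⁻¹ * g * c⁻¹ := by group
        rw [this]; exact conj_pow_eq_one hg)
      have e1 : c⁻¹ * (c * g * c⁻¹) * c = g := by group
      rw [e1] at t
      have e2 : c * g * c⁻¹ = (c⁻¹)⁻¹ * g * c⁻¹ := by group
      rw [e2] at t
      exact be_symm t }
  have hle : Subgroup.closure {x : G | x ∈ v} ≤ H := by
    rw [Subgroup.closure_le]
    intro x hx g hg
    exact conj_entry hg v hx
  obtain ⟨c, hc⟩ := isConj_iff.mp hconj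
  have hcH : c⁻¹ ∈ H := by
    have : (⊤ : Subgroup G) ≤ H := hv ▸ hle
    exact this (Subgroup.mem_top _)
  have hg1 : g₁ ^ n = 1 := by rw [← h₁]; exact pow_orderOf_eq_one g₁
  have := hcH g₁ hg1
  have e : (c⁻¹)⁻¹ * g₁ * c⁻¹ = g₂ := by rw [inv_inv]; exact hc
  rwa [e] at this
end

section
/- Let G be a finite group, Γ ⊆ G a union of conjugacy classes, u_Γ the tuple listing each element g of Γ repeated ord(g) times, and u a tuple with entries in Γ. If w is a tuple generating G with Nielsen type ν(w) ≥ ν(u_Γ·u) (componentwise on conjugacy classes), then there exists a tuple v generating G such that w is braid equivalent to v·u. -/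
open scoped Classical

/-- The Nielsen type: the number of entries of `v` in the conjugacy class of `g`. -/
noncomputable def nielsen {G : Type*} [Group G] (v : List G) (g : G) : ℕ :=
  v.countP (fun x => decide (IsConj g x))

/-- `u_Γ`: the tuple listing each element `g` of `Γ` repeated `ord g` times. -/
noncomputable def uGamma {G : Type*} [Group G] [DecidableEq G] (Γ : Finset G) : List G :=
  Γ.toList.flatMap (fun g => List.replicate (orderOf g) g)

set_option linter.unusedSectionVars false

section Helpers
variable {G : Type*} [Group G]

lemma braid_rfl (v : List G) : BraidEquiv v v := Relation.EqvGen.refl v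

lemma braid_symm {v w : List G} (h : BraidEquiv v w) : BraidEquiv w v :=
  Relation.EqvGen.symm _ _ h

lemma braid_trans {a b c : List G} (h1 : BraidEquiv a b) (h2 : BraidEquiv b c) :
    BraidEquiv a c := Relation.EqvGen.trans _ _ _ h1 h2

lemma braid_cons (x : G) {v w : List G} (h : BraidEquiv v w) :
    BraidEquiv (x :: v) (x :: w) := by
  induction h with
  | rel a b hab =>
    obtain ⟨s, t, p, q, rfl, rfl⟩ := hab
    exact Relation.EqvGen.rel _ _ ⟨x :: s, t, p, q, rfl, rfl⟩
  | refl a => exact braid_rfl _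
  | symm a b _ ih => exact braid_symm ih
  | trans a b c _ _ ih1 ih2 => exact braid_trans ih1 ih2

lemma braid_append_left (l : List G) {v w : List G} (h : BraidEquiv v w) :
    BraidEquiv (l ++ v) (l ++ w) := by
  induction l with
  | nil => simpa using h
  | cons x l ih => exact braid_cons x ih

lemma braid_append_right {v w : List G} (h : BraidEquiv v w) (t : List G) :
    BraidEquiv (v ++ t) (w ++ t) := by
  induction h with
  | rel a b hab =>
    obtain ⟨s, y, p, q, rfl, rfl⟩ := hab
    exact Relation.EqvGen.rel _ _ ⟨s, y ++ t, p, q, by simp, by simp⟩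
  | refl a => exact braid_rfl _
  | symm a b _ ih => exact braid_symm ih
  | trans a b c _ _ ih1 ih2 => exact braid_trans ih1 ih2

lemma braid_mv (l r : List G) (a b : G) :
    BraidEquiv (l ++ a :: b :: r) (l ++ b :: (b⁻¹ * a * b) :: r) :=
  Relation.EqvGen.rel _ _ ⟨l, r, a, b, rfl, rfl⟩

lemma braid_mv2 (l r : List G) (p q : G) :
    BraidEquiv (l ++ p :: q :: r) (l ++ (p * q * p⁻¹) :: p :: r) := by
  have h := braid_mv l r (p * q * p⁻¹) p
  have e : p⁻¹ * (p * q * p⁻¹) * p = q := by group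
  rw [e] at h
  exact braid_symm h

lemma repl_hop (c x : G) : ∀ m : ℕ,
    BraidEquiv (List.replicate m c ++ [x]) ((c ^ m * x * (c ^ m)⁻¹) :: List.replicate m c)
  | 0 => by simpa using braid_rfl [x]
  | (m + 1) => by
    have ih := repl_hop c x m
    have s1 : BraidEquiv (List.replicate (m+1) c ++ [x])
        (c :: (c ^ m * x * (c ^ m)⁻¹) :: List.replicate m c) := by
      rw [List.replicate_succ, List.cons_append]
      exact braid_cons c ih
    have s2 := braid_mv2 ([] : List G) (List.replicate m c) c (c ^ m * x * (c ^ m)⁻¹)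
    have e : c * (c ^ m * x * (c ^ m)⁻¹) * c⁻¹ = c ^ (m+1) * x * (c ^ (m+1))⁻¹ := by
      rw [pow_succ']; group
    have s2' : BraidEquiv (c :: (c ^ m * x * (c ^ m)⁻¹) :: List.replicate m c)
        ((c ^ (m+1) * x * (c ^ (m+1))⁻¹) :: List.replicate (m+1) c) := by
      rw [List.replicate_succ]
      simpa [e] using s2
    exact braid_trans s1 s2'

lemma repl_pass (c x : G) : ∀ m : ℕ,
    BraidEquiv (List.replicate m c ++ [x]) (x :: List.replicate m (x⁻¹ * c * x))
  | 0 => by simpa using braid_rfl [x]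
  | (m + 1) => by
    have ih := repl_pass c x m
    have s1 : BraidEquiv (List.replicate (m+1) c ++ [x])
        (c :: x :: List.replicate m (x⁻¹ * c * x)) := by
      rw [List.replicate_succ, List.cons_append]
      exact braid_cons c ih
    have s2 := braid_mv ([] : List G) (List.replicate m (x⁻¹ * c * x)) c x
    have s2' : BraidEquiv (c :: x :: List.replicate m (x⁻¹ * c * x))
        (x :: List.replicate (m+1) (x⁻¹ * c * x)) := by
      rw [List.replicate_succ]
      simpa using s2
    exact braid_trans s1 s2'

lemma repl_swap {c : G} {n : ℕ} (hc : c ^ n = 1) (x : G) :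
    BraidEquiv (List.replicate n c ++ [x]) (x :: List.replicate n c) := by
  simpa [hc] using repl_hop c x n

lemma repl_comm {c : G} {n : ℕ} (hc : c ^ n = 1) :
    ∀ t : List G, BraidEquiv (t ++ List.replicate n c) (List.replicate n c ++ t)
  | [] => by simpa using braid_rfl (List.replicate n c)
  | (z :: t) => by
    have ih := repl_comm hc t
    have s1 : BraidEquiv (z :: (t ++ List.replicate n c)) (z :: (List.replicate n c ++ t)) :=
      braid_cons z ih
    have s2 : BraidEquiv ((z :: List.replicate n c) ++ t) ((List.replicate n c ++ [z]) ++ t) :=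
      braid_append_right (braid_symm (repl_swap hc z)) t
    have s2' : BraidEquiv (z :: (List.replicate n c ++ t)) (List.replicate n c ++ z :: t) := by
      simpa using s2
    simpa using braid_trans s1 s2'

end Helpers

section Helpers2
variable {G : Type*} [Group G]

lemma conj_pow_eq_one {c x : G} {n : ℕ} (hc : c ^ n = 1) : (x⁻¹ * c * x) ^ n = 1 := by
  have h : (x⁻¹ * c * (x⁻¹)⁻¹) ^ n = x⁻¹ * c ^ n * (x⁻¹)⁻¹ := conj_pow
  simp only [inv_inv] at h
  rw [h, hc]
  group

lemma block_conj_entry {c : G} {n : ℕ} (hc : c ^ n = 1) {l : List G} {x : G} (hx : x ∈ l) :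
    BraidEquiv (l ++ List.replicate n c) (l ++ List.replicate n (x⁻¹ * c * x)) := by
  obtain ⟨l1, l2, rfl⟩ := List.append_of_mem hx
  have s1 : BraidEquiv ((l1 ++ [x]) ++ (l2 ++ List.replicate n c))
      ((l1 ++ [x]) ++ (List.replicate n c ++ l2)) :=
    braid_append_left _ (repl_comm hc l2)
  have s2 : BraidEquiv (x :: List.replicate n c) (x :: List.replicate n (x⁻¹ * c * x)) :=
    braid_trans (braid_symm (repl_swap hc x)) (repl_pass c x n)
  have s2' : BraidEquiv (l1 ++ ((x :: List.replicate n c) ++ l2))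
      (l1 ++ ((x :: List.replicate n (x⁻¹ * c * x)) ++ l2)) :=
    braid_append_left l1 (braid_append_right s2 l2)
  have s3 : BraidEquiv ((l1 ++ [x]) ++ (List.replicate n (x⁻¹ * c * x) ++ l2))
      ((l1 ++ [x]) ++ (l2 ++ List.replicate n (x⁻¹ * c * x))) :=
    braid_append_left _ (braid_symm (repl_comm (conj_pow_eq_one hc) l2))
  have t1 : BraidEquiv ((l1 ++ x :: l2) ++ List.replicate n c)
      ((l1 ++ [x]) ++ (List.replicate n c ++ l2)) := by simpa using s1
  have t2 : BraidEquiv ((l1 ++ [x]) ++ (List.replicate n c ++ l2))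
      ((l1 ++ [x]) ++ (List.replicate n (x⁻¹ * c * x) ++ l2)) := by simpa using s2'
  have t3 : BraidEquiv ((l1 ++ [x]) ++ (List.replicate n (x⁻¹ * c * x) ++ l2))
      ((l1 ++ x :: l2) ++ List.replicate n (x⁻¹ * c * x)) := by simpa using s3
  exact braid_trans (braid_trans t1 t2) t3

lemma block_conj {n : ℕ} {l : List G} {g : G}
    (hg : g ∈ Subgroup.closure {x : G | x ∈ l}) :
    ∀ c : G, c ^ n = 1 →
      BraidEquiv (l ++ List.replicate n c) (l ++ List.replicate n (g⁻¹ * c * g)) := by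
  induction hg using Subgroup.closure_induction with
  | mem x hx => exact fun c hc => block_conj_entry hc hx
  | one => intro c hc; simpa using braid_rfl (l ++ List.replicate n c)
  | mul x y hx hy ihx ihy =>
    intro c hc
    have h1 := ihx c hc
    have h2 := ihy (x⁻¹ * c * x) (conj_pow_eq_one hc)
    have e : (x * y)⁻¹ * c * (x * y) = y⁻¹ * (x⁻¹ * c * x) * y := by group
    rw [e]
    exact braid_trans h1 h2
  | inv x hx ihx =>
    intro c hc
    have hc' : (x * c * x⁻¹) ^ n = 1 := by
      have : ((x⁻¹)⁻¹ * c * x⁻¹) ^ n = 1 := conj_pow_eq_one (x := x⁻¹) hc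
      simpa using this
    have h := ihx (x * c * x⁻¹) hc'
    have e : x⁻¹ * (x * c * x⁻¹) * x = c := by group
    rw [e] at h
    have e2 : (x⁻¹)⁻¹ * c * x⁻¹ = x * c * x⁻¹ := by group
    rw [e2]
    exact braid_symm h

lemma nielsen_hurwitz {v w : List G} (h : HurwitzMove v w) (g : G) :
    nielsen v g = nielsen w g := by
  obtain ⟨s, t, a, b, rfl, rfl⟩ := h
  have hiff : IsConj g (b⁻¹ * a * b) ↔ IsConj g a := by
    constructor
    · intro h'
      exact h'.trans (isConj_iff.mpr ⟨b, by group⟩)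
    · intro h'
      exact h'.trans (isConj_iff.mpr ⟨b⁻¹, by group⟩)
  have e : decide (IsConj g (b⁻¹ * a * b)) = decide (IsConj g a) :=
    decide_eq_decide.mpr hiff
  simp only [nielsen, List.countP_append, List.countP_cons, e]
  omega

lemma nielsen_braid {v w : List G} (h : BraidEquiv v w) (g : G) :
    nielsen v g = nielsen w g := by
  induction h with
  | rel a b hab => exact nielsen_hurwitz hab g
  | refl a => rfl
  | symm a b _ ih => exact ih.symm
  | trans a b c _ _ ih1 ih2 => exact ih1.trans ih2

lemma closure_hurwitz {v w : List G} (h : HurwitzMove v w) :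
    Subgroup.closure {x : G | x ∈ v} = Subgroup.closure {x : G | x ∈ w} := by
  obtain ⟨s, t, a, b, rfl, rfl⟩ := h
  apply le_antisymm <;> rw [Subgroup.closure_le] <;> intro z hz <;>
    simp only [Set.mem_setOf_eq, List.mem_append, List.mem_cons] at hz
  · rcases hz with hz | hz | hz | hz
    · exact Subgroup.subset_closure (by simp [hz])
    · -- z = a
      subst hz
      have hb : b ∈ Subgroup.closure {x : G | x ∈ s ++ b :: (b⁻¹ * z * b) :: t} :=
        Subgroup.subset_closure (by simp)
      have hab : b⁻¹ * z * b ∈ Subgroup.closure {x : G | x ∈ s ++ b :: (b⁻¹ * z * b) :: t} :=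
        Subgroup.subset_closure (by simp)
      have : b * (b⁻¹ * z * b) * b⁻¹ ∈
          Subgroup.closure {x : G | x ∈ s ++ b :: (b⁻¹ * z * b) :: t} :=
        mul_mem (mul_mem hb hab) (inv_mem hb)
      simpa [mul_assoc] using this
    · exact Subgroup.subset_closure (by simp [hz])
    · exact Subgroup.subset_closure (by simp [hz])
  · rcases hz with hz | hz | hz | hz
    · exact Subgroup.subset_closure (by simp [hz])
    · exact Subgroup.subset_closure (by simp [hz])
    · -- z = b⁻¹ * a * b
      subst hz
      have hb : b ∈ Subgroup.closure {x : G | x ∈ s ++ a :: b :: t} :=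
        Subgroup.subset_closure (by simp)
      have ha : a ∈ Subgroup.closure {x : G | x ∈ s ++ a :: b :: t} :=
        Subgroup.subset_closure (by simp)
      exact mul_mem (mul_mem (inv_mem hb) ha) hb
    · exact Subgroup.subset_closure (by simp [hz])

lemma closure_braid {v w : List G} (h : BraidEquiv v w) :
    Subgroup.closure {x : G | x ∈ v} = Subgroup.closure {x : G | x ∈ w} := by
  induction h with
  | rel a b hab => exact closure_hurwitz hab
  | refl a => rfl
  | symm a b _ ih => exact ih.symm
  | trans a b c _ _ ih1 ih2 => exact ih1.trans ih2

end Helpers2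

section Helpers3
variable {G : Type*} [Group G]

lemma pull_to_end : ∀ (r l : List G) (c : G),
    BraidEquiv (l ++ c :: r) (l ++ (r.map fun z => c * z * c⁻¹) ++ [c])
  | [], l, c => by simpa using braid_rfl (l ++ [c])
  | (z :: r), l, c => by
    have s1 : BraidEquiv (l ++ c :: z :: r) (l ++ (c * z * c⁻¹) :: c :: r) :=
      braid_mv2 l r c z
    have ih := pull_to_end r (l ++ [c * z * c⁻¹]) c
    have s2 : BraidEquiv (l ++ (c * z * c⁻¹) :: c :: r)
        (l ++ ((c * z * c⁻¹) :: (r.map fun z => c * z * c⁻¹)) ++ [c]) := by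
      simpa [List.append_assoc] using ih
    simpa using braid_trans s1 s2

lemma collect [DecidableEq G] : ∀ (k : ℕ) (w : List G) (c : G), k ≤ w.count c →
    ∃ w0 : List G, BraidEquiv w (w0 ++ List.replicate k c)
  | 0, w, c, _ => ⟨w, by simpa using braid_rfl w⟩
  | (k + 1), w, c, h => by
    have hc : c ∈ w := List.count_pos_iff.mp (by omega)
    obtain ⟨l, r, rfl⟩ := List.append_of_mem hc
    have s1 := pull_to_end r l c
    set w1 := l ++ (r.map fun z => c * z * c⁻¹) with hw1
    have hcnt : k ≤ w1.count c := by
      have hinj : Function.Injective (fun z : G => c * z * c⁻¹) := fun x y hxy => by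
        simpa using mul_left_cancel (mul_right_cancel hxy)
      have e1 : List.count c (r.map fun z => c * z * c⁻¹) = List.count c r := by
        have := List.count_map_of_injective r (fun z : G => c * z * c⁻¹) hinj c
        simpa using this
      have e2 : (l ++ c :: r).count c = l.count c + (r.count c + 1) := by
        simp [List.count_append, List.count_cons]
      have e3 : w1.count c = l.count c + r.count c := by
        simp [hw1, List.count_append, e1]
      omega
    obtain ⟨w0, hb⟩ := collect k w1 c hcnt
    refine ⟨w0, ?_⟩
    have s2 : BraidEquiv (w1 ++ [c]) ((w0 ++ List.replicate k c) ++ [c]) :=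
      braid_append_right hb [c]
    have s3 : BraidEquiv (l ++ c :: r) (w1 ++ [c]) := by
      simpa [hw1, List.append_assoc] using s1
    have := braid_trans s3 s2
    simpa [List.append_assoc, ← List.replicate_succ'] using this

lemma nielsen_uGamma [Fintype G] [DecidableEq G] (Γ : Finset G)
    (hΓ : ∀ a ∈ Γ, ∀ g : G, g⁻¹ * a * g ∈ Γ) {a : G} (ha : a ∈ Γ) :
    nielsen (uGamma Γ) a =
      orderOf a * (Finset.univ.filter (fun x : G => IsConj a x)).card := by
  classical
  set C := Finset.univ.filter (fun x : G => IsConj a x) with hC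
  have hCsub : ∀ g ∈ C, g ∈ Γ := by
    intro g hg
    rw [hC, Finset.mem_filter] at hg
    obtain ⟨h, rfl⟩ := isConj_iff.mp hg.2
    simpa using hΓ a ha h⁻¹
  have hord : ∀ g ∈ C, orderOf g = orderOf a := by
    intro g hg
    rw [hC, Finset.mem_filter] at hg
    obtain ⟨h, rfl⟩ := isConj_iff.mp hg.2
    have := orderOf_injective (MulAut.conj h).toMonoidHom (MulEquiv.injective _) a
    simpa using this
  have e1 : nielsen (uGamma Γ) a =
      (Γ.toList.map (fun g => if IsConj a g then orderOf g else 0)).sum := by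
    rw [nielsen, uGamma, List.countP_flatMap]
    congr 1
    apply List.map_congr_left
    intro g _
    simp [List.countP_replicate]
  have e2 : (Γ.toList.map (fun g => if IsConj a g then orderOf g else 0)).sum =
      ∑ g ∈ Γ, if IsConj a g then orderOf g else 0 := by
    rw [← Multiset.sum_coe, ← Multiset.map_coe, Finset.coe_toList]
    rfl
  have e3 : (∑ g ∈ Γ, if IsConj a g then orderOf g else 0) =
      ∑ g ∈ Γ.filter (fun g => IsConj a g), orderOf g := (Finset.sum_filter _ _).symm
  have e4 : Γ.filter (fun g => IsConj a g) = C := by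
    ext g
    simp only [Finset.mem_filter, hC, Finset.mem_univ, true_and]
    exact ⟨fun h => h.2, fun h => ⟨hCsub g (by rw [hC]; exact Finset.mem_filter.mpr ⟨Finset.mem_univ g, h⟩), h⟩⟩
  have e5 : ∑ g ∈ C, orderOf g = C.card * orderOf a := by
    rw [Finset.sum_congr rfl hord, Finset.sum_const, smul_eq_mul]
  rw [e1, e2, e3, e4, e5, mul_comm]

end Helpers3

section Helpers4
variable {G : Type*} [Group G]

lemma nielsen_append (v w : List G) (g : G) :
    nielsen (v ++ w) g = nielsen v g + nielsen w g := by
  rw [nielsen, nielsen, nielsen]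
  exact List.countP_append

lemma nielsen_singleton_self (a : G) : nielsen [a] a = 1 := by
  rw [nielsen, List.countP_cons, List.countP_nil, decide_eq_true (IsConj.refl a)]
  simp

lemma countP_le_sum_count [DecidableEq G] (p : G → Bool) (S : Finset G)
    (hS : ∀ x : G, p x = true → x ∈ S) :
    ∀ w : List G, w.countP p ≤ ∑ x ∈ S, w.count x := by
  intro w
  induction w with
  | nil => simp
  | cons z w ih =>
    have hsum : ∑ x ∈ S, (z :: w).count x
        = (∑ x ∈ S, w.count x) + ∑ x ∈ S, (if z = x then 1 else 0) := by
      rw [← Finset.sum_add_distrib]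
      apply Finset.sum_congr rfl
      intro x _
      rw [List.count_cons]
      simp [beq_iff_eq]
    rw [List.countP_cons, hsum]
    have hz : (if p z = true then 1 else 0) ≤ ∑ x ∈ S, (if z = x then 1 else 0) := by
      by_cases hp : p z = true
      · have hzS : z ∈ S := hS z hp
        have he : (∑ x ∈ S, if z = x then 1 else 0) = 1 := by
          rw [Finset.sum_ite_eq S z (fun _ => 1)]
          simp [hzS]
        rw [he]
        simp [hp]
      · simp [hp]
    omega

lemma exists_repeated [DecidableEq G] (a : G) (n : ℕ) (w : List G) (S : Finset G)
    (hSmem : ∀ x : G, IsConj a x → x ∈ S)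
    (h : n * S.card + 1 ≤ nielsen w a) :
    ∃ c : G, IsConj a c ∧ n + 1 ≤ w.count c := by
  classical
  by_contra hcon
  push_neg at hcon
  set S' := S.filter (fun x => IsConj a x) with hS'
  have h1 : nielsen w a ≤ ∑ x ∈ S', w.count x := by
    rw [nielsen]
    apply countP_le_sum_count
    intro x hx
    rw [hS', Finset.mem_filter]
    have hc : IsConj a x := of_decide_eq_true hx
    exact ⟨hSmem x hc, hc⟩
  have h2 : ∑ x ∈ S', w.count x ≤ S'.card * n := by
    calc ∑ x ∈ S', w.count x ≤ ∑ _x ∈ S', n := by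
          apply Finset.sum_le_sum
          intro x hx
          rw [hS', Finset.mem_filter] at hx
          have := hcon x hx.2
          omega
      _ = S'.card * n := by rw [Finset.sum_const, smul_eq_mul]
  have h3 : S'.card ≤ S.card := Finset.card_le_card (by rw [hS']; exact Finset.filter_subset _ _)
  have h4 : S'.card * n ≤ S.card * n := Nat.mul_le_mul_right n h3
  have h5 : S.card * n = n * S.card := mul_comm _ _
  omega

end Helpers4

lemma main_aux {G : Type*} [Group G] [Fintype G] [DecidableEq G]
    (Γ : Finset G) (hΓ : ∀ a ∈ Γ, ∀ g : G, g⁻¹ * a * g ∈ Γ) :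
    ∀ u : List G, (∀ x ∈ u, x ∈ Γ) → ∀ w : List G,
      Subgroup.closure {x : G | x ∈ w} = ⊤ →
      (∀ g : G, nielsen (uGamma Γ ++ u) g ≤ nielsen w g) →
      ∃ v : List G, Subgroup.closure {x : G | x ∈ v} = ⊤ ∧ BraidEquiv w (v ++ u) := by
  intro u
  induction u using List.reverseRecOn with
  | nil => exact fun _ w hw _ => ⟨w, hw, by simpa using braid_rfl w⟩
  | append_singleton u' a ih =>
    intro hu w hw hν
    have ha : a ∈ Γ := hu a (by simp)
    set n := orderOf a with hn
    set C := Finset.univ.filter (fun x : G => IsConj a x) with hC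
    have hug : nielsen (uGamma Γ) a = n * C.card := nielsen_uGamma Γ hΓ ha
    have hsing : nielsen [a] a = 1 := nielsen_singleton_self a
    have hwn : n * C.card + 1 ≤ nielsen w a := by
      have h1 := hν a
      rw [nielsen_append, nielsen_append, hsing, hug] at h1
      omega
    have hCmem : ∀ x : G, IsConj a x → x ∈ C := by
      intro x hx
      rw [hC]
      exact Finset.mem_filter.mpr ⟨Finset.mem_univ x, hx⟩
    obtain ⟨c, hac, hcount⟩ := exists_repeated a n w C hCmem hwn
    have hcn : c ^ n = 1 := by
      obtain ⟨h, rfl⟩ := isConj_iff.mp hac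
      have e := conj_pow (a := h) (b := a) (i := n)
      rw [e, hn, pow_orderOf_eq_one]
      group
    obtain ⟨w0, hbw⟩ := collect (n + 1) w c hcount
    have hb2 : BraidEquiv w ((w0 ++ [c]) ++ List.replicate n c) := by
      simpa [List.append_assoc, List.replicate_succ] using hbw
    set l := w0 ++ [c] with hl
    have hcl : Subgroup.closure {x : G | x ∈ l} = ⊤ := by
      have h1 := closure_braid hb2
      have hset : {x : G | x ∈ l ++ List.replicate n c} = {x : G | x ∈ l} := by
        ext z
        simp only [Set.mem_setOf_eq, List.mem_append, List.mem_replicate]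
        constructor
        · rintro (hz | ⟨-, rfl⟩)
          · exact hz
          · simp [hl]
        · exact Or.inl
      rw [← hset, ← h1]
      exact hw
    obtain ⟨h0, hh0⟩ := isConj_iff.mp hac
    have hg : h0 ∈ Subgroup.closure {x : G | x ∈ l} := by
      rw [hcl]; exact Subgroup.mem_top h0
    have hb3 := block_conj hg c hcn
    have hea : h0⁻¹ * c * h0 = a := by rw [← hh0]; group
    rw [hea] at hb3
    have hbig : BraidEquiv w (l ++ List.replicate n a) := braid_trans hb2 hb3
    have hnpos : 1 ≤ n := hn ▸ orderOf_pos a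
    obtain ⟨m, hm⟩ : ∃ m, n = m + 1 := ⟨n - 1, by omega⟩
    have hbv : BraidEquiv w ((l ++ List.replicate m a) ++ [a]) := by
      rw [List.append_assoc, ← List.replicate_succ', ← hm]; exact hbig
    set v' := l ++ List.replicate m a with hv'
    have hv'cl : Subgroup.closure {x : G | x ∈ v'} = ⊤ := by
      rw [eq_top_iff, ← hcl]
      apply Subgroup.closure_mono
      intro z hz
      simp only [Set.mem_setOf_eq] at hz ⊢
      exact List.mem_append.mpr (Or.inl hz)
    have hν' : ∀ g : G, nielsen (uGamma Γ ++ u') g ≤ nielsen v' g := by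
      intro g
      have e1 := nielsen_braid hbv g
      rw [nielsen_append] at e1
      have e2 := hν g
      rw [nielsen_append, nielsen_append] at e2
      rw [nielsen_append]
      omega
    have hu' : ∀ x ∈ u', x ∈ Γ := fun x hx => hu x (List.mem_append.mpr (Or.inl hx))
    obtain ⟨v, hvcl, hvb⟩ := ih hu' v' hv'cl hν'
    refine ⟨v, hvcl, ?_⟩
    have h4 : BraidEquiv (v' ++ [a]) ((v ++ u') ++ [a]) := braid_append_right hvb [a]
    have h5 := braid_trans hbv h4
    simpa [List.append_assoc] using h5


/-- If `w` generates `G`, `u` has entries in the union of conjugacy classes `Γ`, and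
`ν(w) ≥ ν(u_Γ · u)` componentwise, then `w ≈ v·u` for some tuple `v` generating `G`. -/
theorem exists_generating_prefix {G : Type*} [Group G] [Fintype G] [DecidableEq G]
    (Γ : Finset G) (hΓ : ∀ a ∈ Γ, ∀ g : G, g⁻¹ * a * g ∈ Γ)
    (u : List G) (hu : ∀ x ∈ u, x ∈ Γ)
    (w : List G) (hw : Subgroup.closure {x : G | x ∈ w} = ⊤)
    (hν : ∀ g : G, nielsen (uGamma Γ ++ u) g ≤ nielsen w g) :
    ∃ v : List G, Subgroup.closure {x : G | x ∈ v} = ⊤ ∧ BraidEquiv w (v ++ u) := by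
  exact main_aux Γ hΓ u hu w hw hν
end

section
/- Let G be a finite group generated by a subset closed under conjugation Γ. The assignment e_a ↦ â (tautological lift) on generators extends to an injective group homomorphism Adj Γ → F/R_Γ that admits a left inverse, where F is the free group on the set G and R_Γ is the normal subgroup generated by [F,R] and the elements â b̂ ĉ⁻¹ b̂⁻¹ for a ∈ Γ, b ∈ G, c = b⁻¹ab, with R = ker(F → G). -/
variable (G : Type*) [Group G]

/-- The canonical surjection from the free group `F` on the set `G` to `G`. -/
def tautProj : FreeGroup G →* G := FreeGroup.lift id

/-- `R = ker (F → G)`. -/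
def Rrel : Subgroup (FreeGroup G) := (tautProj G).ker

/-- The commutator subgroup `[F, R]`. -/
def FRcomm : Subgroup (FreeGroup G) := ⁅(⊤ : Subgroup (FreeGroup G)), Rrel G⁆

/-- The tautological lifts `â b̂ ĉ⁻¹ b̂⁻¹` of the conjugation relations, `a ∈ Γ`,
`c = b⁻¹ a b`. -/
def conjRels (Γ : Set G) : Set (FreeGroup G) :=
  {x | ∃ a ∈ Γ, ∃ b : G, x = FreeGroup.of a * FreeGroup.of b *
    (FreeGroup.of (b⁻¹ * a * b))⁻¹ * (FreeGroup.of b)⁻¹}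

/-- `R_Γ`: the normal subgroup generated by `[F,R]` and the lifted conjugation relations. -/
def RGamma (Γ : Set G) : Subgroup (FreeGroup G) :=
  Subgroup.normalClosure ((FRcomm G : Set (FreeGroup G)) ∪ conjRels G Γ)

instance (Γ : Set G) : (RGamma G Γ).Normal := Subgroup.normalClosure_normal

/-- The relations `e_a e_b = e_b e_{b⁻¹ a b}` for the adjoint group `Adj Γ` of the
conjugation quandle `Γ`. -/
def adjRels (Γ : Set G) (hΓ : ∀ a ∈ Γ, ∀ b : G, b⁻¹ * a * b ∈ Γ) : Set (FreeGroup Γ) :=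
  {x | ∃ a b : Γ, x = FreeGroup.of a * FreeGroup.of b *
    (FreeGroup.of (⟨(↑b)⁻¹ * ↑a * ↑b, hΓ a a.2 b⟩ : Γ))⁻¹ * (FreeGroup.of b)⁻¹}

section Aux

variable {Γ : Set G} (hΓ : ∀ a ∈ Γ, ∀ b : G, b⁻¹ * a * b ∈ Γ)

/-- The projection `Adj Γ →* G`, `e_a ↦ a`. -/
def adjProj : PresentedGroup (adjRels G Γ hΓ) →* G :=
  PresentedGroup.toGroup (f := fun a : Γ => (a : G)) (by
    rintro r ⟨a, b, rfl⟩
    simp only [map_mul, map_inv, FreeGroup.lift_apply_of]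
    group)

@[simp] lemma adjProj_of (a : Γ) : adjProj G hΓ (PresentedGroup.of a) = a :=
  PresentedGroup.toGroup.of _

lemma of_subtype_congr {v w : G} (hv : v ∈ Γ) (hw : w ∈ Γ) (h : v = w) :
    (PresentedGroup.of (⟨v, hv⟩ : Γ) : PresentedGroup (adjRels G Γ hΓ)) =
      PresentedGroup.of ⟨w, hw⟩ := by
  subst h; rfl

lemma adj_rel (a b : Γ) :
    (PresentedGroup.of b)⁻¹ * PresentedGroup.of a * PresentedGroup.of b =
      (PresentedGroup.of (⟨(↑b)⁻¹ * ↑a * ↑b, hΓ a a.2 b⟩ : Γ) :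
        PresentedGroup (adjRels G Γ hΓ)) := by
  have h : (PresentedGroup.mk (adjRels G Γ hΓ))
      (FreeGroup.of a * FreeGroup.of b *
        (FreeGroup.of (⟨(↑b)⁻¹ * ↑a * ↑b, hΓ a a.2 b⟩ : Γ))⁻¹ * (FreeGroup.of b)⁻¹) = 1 :=
    (QuotientGroup.eq_one_iff _).mpr (Subgroup.subset_normalClosure ⟨a, b, rfl⟩)
  simp only [map_mul, map_inv] at h
  have h2 : PresentedGroup.of a * PresentedGroup.of b =
      PresentedGroup.of b *
        (PresentedGroup.of (⟨(↑b)⁻¹ * ↑a * ↑b, hΓ a a.2 b⟩ : Γ) :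
          PresentedGroup (adjRels G Γ hΓ)) := by
    rw [mul_inv_eq_one, mul_inv_eq_iff_eq_mul] at h
    exact h
  rw [mul_assoc, h2, inv_mul_cancel_left]

lemma adj_conj (x : PresentedGroup (adjRels G Γ hΓ)) (a : Γ) :
    x⁻¹ * PresentedGroup.of a * x =
      PresentedGroup.of ⟨(adjProj G hΓ x)⁻¹ * ↑a * adjProj G hΓ x,
        hΓ a a.2 (adjProj G hΓ x)⟩ := by
  induction x using PresentedGroup.induction_on with
  | _ z =>
  revert a
  induction z using FreeGroup.induction_on with
  | C1 =>
      intro a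
      simp only [map_one, inv_one, one_mul, mul_one, Subtype.coe_eta]
  | of b =>
      intro a
      have hb : (pure b : FreeGroup Γ) = FreeGroup.of b := rfl
      have hmk : (PresentedGroup.mk (adjRels G Γ hΓ)) (FreeGroup.of b) =
        PresentedGroup.of b := rfl
      rw [hmk, adj_rel G hΓ a b]
      exact of_subtype_congr G hΓ _ _ (by rw [adjProj_of])
  | inv_of b _ =>
      intro a
      have hb : (pure b : FreeGroup Γ) = FreeGroup.of b := rfl
      have hmk : (PresentedGroup.mk (adjRels G Γ hΓ)) (FreeGroup.of b)⁻¹ =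
        (PresentedGroup.of b)⁻¹ := by rw [map_inv]; rfl
      rw [hmk]
      set a' : Γ := ⟨(↑b)⁻¹⁻¹ * ↑a * (↑b)⁻¹, hΓ a a.2 (↑b)⁻¹⟩ with ha'
      have h := adj_rel G hΓ a' b
      have h2 : (PresentedGroup.of (⟨(↑b)⁻¹ * ↑a' * ↑b, hΓ a' a'.2 b⟩ : Γ) :
          PresentedGroup (adjRels G Γ hΓ)) = PresentedGroup.of a := by
        rw [of_subtype_congr G hΓ _ a.2 (by rw [ha']; group), Subtype.coe_eta]
      rw [h2] at h
      have h3 : (PresentedGroup.of (⟨(adjProj G hΓ (PresentedGroup.of b)⁻¹)⁻¹ * ↑a *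
          adjProj G hΓ (PresentedGroup.of b)⁻¹,
          hΓ a a.2 (adjProj G hΓ (PresentedGroup.of b)⁻¹)⟩ : Γ) :
          PresentedGroup (adjRels G Γ hΓ)) = PresentedGroup.of a' :=
        of_subtype_congr G hΓ _ _ (by rw [map_inv, adjProj_of])
      rw [h3, ← h]
      group
  | mul z w hz hw =>
      intro a
      simp only [map_mul, mul_inv_rev]
      rw [show ((PresentedGroup.mk (adjRels G Γ hΓ)) w)⁻¹ *
          ((PresentedGroup.mk (adjRels G Γ hΓ)) z)⁻¹ * PresentedGroup.of a *
          ((PresentedGroup.mk (adjRels G Γ hΓ)) z * (PresentedGroup.mk (adjRels G Γ hΓ)) w) =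
          ((PresentedGroup.mk (adjRels G Γ hΓ)) w)⁻¹ *
          (((PresentedGroup.mk (adjRels G Γ hΓ)) z)⁻¹ * PresentedGroup.of a *
          (PresentedGroup.mk (adjRels G Γ hΓ)) z) * (PresentedGroup.mk (adjRels G Γ hΓ)) w
          from by group, hz a, hw _]
      refine of_subtype_congr G hΓ _ _ ?_
      show (adjProj G hΓ ((PresentedGroup.mk (adjRels G Γ hΓ)) w))⁻¹ *
          ((adjProj G hΓ ((PresentedGroup.mk (adjRels G Γ hΓ)) z))⁻¹ * ↑a *
          adjProj G hΓ ((PresentedGroup.mk (adjRels G Γ hΓ)) z)) *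
          adjProj G hΓ ((PresentedGroup.mk (adjRels G Γ hΓ)) w) = _
      group

lemma adj_central (x : PresentedGroup (adjRels G Γ hΓ)) (hx : adjProj G hΓ x = 1)
    (y : PresentedGroup (adjRels G Γ hΓ)) : x * y = y * x := by
  have h : ∀ a : Γ, x * PresentedGroup.of a = PresentedGroup.of a * x := by
    intro a
    have h1 := adj_conj G hΓ x a
    have h2 : (PresentedGroup.of (⟨(adjProj G hΓ x)⁻¹ * ↑a * adjProj G hΓ x,
        hΓ a a.2 (adjProj G hΓ x)⟩ : Γ) : PresentedGroup (adjRels G Γ hΓ)) =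
        PresentedGroup.of a := by
      rw [of_subtype_congr G hΓ _ a.2 (by rw [hx]; group), Subtype.coe_eta]
    rw [h2] at h1
    nth_rewrite 1 [← h1]
    group
  have hy : y ∈ Subgroup.centralizer ({x} : Set (PresentedGroup (adjRels G Γ hΓ))) := by
    apply PresentedGroup.generated_by
    intro j
    rw [Subgroup.mem_centralizer_iff]
    intro g hg
    rw [Set.mem_singleton_iff] at hg
    subst hg
    exact h j
  exact (Subgroup.mem_centralizer_iff.mp hy) x rfl

lemma adjProj_surjective (hgen : Subgroup.closure Γ = ⊤) :
    Function.Surjective (adjProj G hΓ) := by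
  intro g
  have hle : Subgroup.closure Γ ≤ (adjProj G hΓ).range :=
    (Subgroup.closure_le _).2 (fun a ha => ⟨PresentedGroup.of ⟨a, ha⟩, adjProj_of G hΓ _⟩)
  have : g ∈ (adjProj G hΓ).range := hle (hgen ▸ Subgroup.mem_top g)
  exact this

open Classical in
/-- A set-theoretic section `G → Adj Γ` which is `a ↦ e_a` on `Γ`. -/
noncomputable def psi0 (hgen : Subgroup.closure Γ = ⊤) : G → PresentedGroup (adjRels G Γ hΓ) :=
  fun g => if h : g ∈ Γ then PresentedGroup.of ⟨g, h⟩
    else (adjProj_surjective G hΓ hgen g).choose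

lemma adjProj_psi0 (hgen : Subgroup.closure Γ = ⊤) (g : G) :
    adjProj G hΓ (psi0 G hΓ hgen g) = g := by
  unfold psi0
  split
  · exact adjProj_of G hΓ _
  · exact (adjProj_surjective G hΓ hgen g).choose_spec

lemma psi0_of_mem (hgen : Subgroup.closure Γ = ⊤) {a : G} (ha : a ∈ Γ) :
    psi0 G hΓ hgen a = PresentedGroup.of ⟨a, ha⟩ := by
  unfold psi0
  exact dif_pos ha

end Aux

/-- For `Γ` a conjugation-closed generating subset of a finite group `G`, the assignment
`e_a ↦ â` extends to an injective group homomorphism `Adj Γ → F/R_Γ` with a left inverse. -/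
theorem adj_to_GGamma_injective [Fintype G] (Γ : Set G)
    (hΓ : ∀ a ∈ Γ, ∀ b : G, b⁻¹ * a * b ∈ Γ)
    (hgen : Subgroup.closure Γ = ⊤) :
    ∃ φ : PresentedGroup (adjRels G Γ hΓ) →* FreeGroup G ⧸ RGamma G Γ,
      (∀ a : Γ, φ (PresentedGroup.of a) = QuotientGroup.mk (FreeGroup.of (a : G))) ∧
      Function.Injective φ ∧
      ∃ ψ : (FreeGroup G ⧸ RGamma G Γ) →* PresentedGroup (adjRels G Γ hΓ),
        ∀ x, ψ (φ x) = x := by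
  classical
  -- the lift of ψ0 to the free group
  set Ψ : FreeGroup G →* PresentedGroup (adjRels G Γ hΓ) :=
    FreeGroup.lift (psi0 G hΓ hgen) with hΨdef
  have hΨof : ∀ g : G, Ψ (FreeGroup.of g) = psi0 G hΓ hgen g := fun g => FreeGroup.lift_apply_of
  have hcomp : ∀ x, adjProj G hΓ (Ψ x) = tautProj G x := by
    intro x
    have he : (adjProj G hΓ).comp Ψ = tautProj G := by
      apply FreeGroup.ext_hom
      intro g
      simp only [MonoidHom.comp_apply, hΨof, adjProj_psi0, tautProj, FreeGroup.lift_apply_of, id]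
    exact DFunLike.congr_fun he x
  -- Ψ kills R_Γ
  have hker : RGamma G Γ ≤ Ψ.ker := by
    apply Subgroup.normalClosure_le_normal
    rintro x (hx | hx)
    · have hle : FRcomm G ≤ Ψ.ker := by
        rw [FRcomm, Subgroup.commutator_le]
        intro p _ r hr
        rw [MonoidHom.mem_ker, map_commutatorElement]
        have hr1 : adjProj G hΓ (Ψ r) = 1 := by rw [hcomp]; exact hr
        exact commutatorElement_eq_one_iff_commute.mpr
          (adj_central G hΓ (Ψ r) hr1 (Ψ p)).symm
      exact hle hx
    · obtain ⟨a, ha, b, rfl⟩ := hx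
      rw [SetLike.mem_coe, MonoidHom.mem_ker]
      simp only [map_mul, map_inv, hΨof]
      rw [psi0_of_mem G hΓ hgen ha, psi0_of_mem G hΓ hgen (hΓ a ha b)]
      have h := adj_conj G hΓ (psi0 G hΓ hgen b) ⟨a, ha⟩
      have h2 : (PresentedGroup.of (⟨(adjProj G hΓ (psi0 G hΓ hgen b))⁻¹ * ↑(⟨a, ha⟩ : Γ) *
          adjProj G hΓ (psi0 G hΓ hgen b),
          hΓ ((⟨a, ha⟩ : Γ) : G) (⟨a, ha⟩ : Γ).2 (adjProj G hΓ (psi0 G hΓ hgen b))⟩ : Γ) :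
          PresentedGroup (adjRels G Γ hΓ)) =
          PresentedGroup.of ⟨b⁻¹ * a * b, hΓ a ha b⟩ :=
        of_subtype_congr G hΓ _ _ (by rw [adjProj_psi0])
      rw [h2] at h
      rw [← h]
      group
  -- the left inverse ψ
  set ψ : (FreeGroup G ⧸ RGamma G Γ) →* PresentedGroup (adjRels G Γ hΓ) :=
    QuotientGroup.lift (RGamma G Γ) Ψ (fun x hx => MonoidHom.mem_ker.mp (hker hx)) with hψdef
  -- the homomorphism φ
  have hφrels : ∀ r ∈ adjRels G Γ hΓ,
      FreeGroup.lift (fun a : Γ =>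
        (QuotientGroup.mk (FreeGroup.of (a : G)) : FreeGroup G ⧸ RGamma G Γ)) r = 1 := by
    rintro r ⟨a, b, rfl⟩
    simp only [map_mul, map_inv, FreeGroup.lift_apply_of]
    have : (QuotientGroup.mk (FreeGroup.of (a : G) * FreeGroup.of (b : G) *
        (FreeGroup.of ((b : G)⁻¹ * a * b))⁻¹ * (FreeGroup.of (b : G))⁻¹) :
        FreeGroup G ⧸ RGamma G Γ) = 1 :=
      (QuotientGroup.eq_one_iff _).mpr
        (Subgroup.subset_normalClosure (Or.inr ⟨a, a.2, b, rfl⟩))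
    simpa only [QuotientGroup.mk_mul, QuotientGroup.mk_inv] using this
  refine ⟨PresentedGroup.toGroup hφrels, fun a => PresentedGroup.toGroup.of hφrels, ?_, ?_⟩
  · -- injectivity from the left inverse
    have hli : ∀ x, ψ (PresentedGroup.toGroup hφrels x) = x := by
      have he : ψ.comp (PresentedGroup.toGroup hφrels) =
          MonoidHom.id (PresentedGroup (adjRels G Γ hΓ)) := by
        apply PresentedGroup.ext
        intro a
        simp only [MonoidHom.comp_apply, MonoidHom.id_apply, PresentedGroup.toGroup.of]
        show ψ (QuotientGroup.mk (FreeGroup.of (a : G))) = PresentedGroup.of a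
        rw [hψdef]
        show Ψ (FreeGroup.of (a : G)) = PresentedGroup.of a
        rw [hΨof, psi0_of_mem G hΓ hgen a.2, Subtype.coe_eta]
      intro x
      exact DFunLike.congr_fun he x
    exact Function.LeftInverse.injective hli
  · refine ⟨ψ, ?_⟩
    have he : ψ.comp (PresentedGroup.toGroup hφrels) =
        MonoidHom.id (PresentedGroup (adjRels G Γ hΓ)) := by
      apply PresentedGroup.ext
      intro a
      simp only [MonoidHom.comp_apply, MonoidHom.id_apply, PresentedGroup.toGroup.of]
      show ψ (QuotientGroup.mk (FreeGroup.of (a : G))) = PresentedGroup.of a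
      rw [hψdef]
      show Ψ (FreeGroup.of (a : G)) = PresentedGroup.of a
      rw [hΨof, psi0_of_mem G hΓ hgen a.2, Subtype.coe_eta]
    intro x
    exact DFunLike.congr_fun he x
end

section
/- Let G be a finite group and Γ ⊆ G a union of conjugacy classes generating G. Then H_{2,Γ}(G) := ker(G_Γ → G × G_Γ^{ab}) is isomorphic to ker(∂_Γ) ∩ [Adj Γ, Adj Γ], where ∂_Γ : Adj Γ → G is induced by e_g ↦ g. -/
variable (G : Type*) [Group G]

namespace H2AuxProof

variable {H : Type*} [Group H] {Γ : Set H} {hΓ : ∀ a ∈ Γ, ∀ b : H, b⁻¹ * a * b ∈ Γ}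

theorem of_eq_of {α : Type*} {rels : Set (FreeGroup α)} {c d : α} (h : c = d) :
    (PresentedGroup.of c : PresentedGroup rels) = PresentedGroup.of d := by
  rw [h]

omit [Group H] in
theorem sub_eq {p : H → Prop} {c d : H} (hc : p c) (hd : p d) (h : c = d) :
    (⟨c, hc⟩ : Subtype p) = ⟨d, hd⟩ := Subtype.ext h

theorem mem_commutator_map {A B : Type*} [Group A] [Group B] (f : A →* B) {x : A}
    (hx : x ∈ commutator A) : f x ∈ commutator B := by
  have h : f x ∈ Subgroup.map f (commutator A) := Subgroup.mem_map_of_mem f hx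
  rw [commutator_def, Subgroup.map_commutator] at h
  rw [commutator_def]
  exact Subgroup.commutator_mono le_top le_top h

theorem adj_rel (a b : Γ) :
    (PresentedGroup.of a : PresentedGroup (adjRels H Γ hΓ)) * PresentedGroup.of b =
      PresentedGroup.of b * PresentedGroup.of (⟨(↑b)⁻¹ * ↑a * ↑b, hΓ a a.2 b⟩ : Γ) := by
  have hmem : (FreeGroup.of a * FreeGroup.of b *
      (FreeGroup.of (⟨(↑b)⁻¹ * ↑a * ↑b, hΓ a a.2 b⟩ : Γ))⁻¹ * (FreeGroup.of b)⁻¹) ∈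
      Subgroup.normalClosure (adjRels H Γ hΓ) :=
    Subgroup.subset_normalClosure ⟨a, b, rfl⟩
  have h1 : (PresentedGroup.mk (adjRels H Γ hΓ)) (FreeGroup.of a * FreeGroup.of b *
      (FreeGroup.of (⟨(↑b)⁻¹ * ↑a * ↑b, hΓ a a.2 b⟩ : Γ))⁻¹ * (FreeGroup.of b)⁻¹) = 1 :=
    (QuotientGroup.eq_one_iff _).2 hmem
  simp only [map_mul, map_inv] at h1
  rw [mul_inv_eq_one, mul_inv_eq_iff_eq_mul] at h1
  exact h1

theorem adj_conj (δ : PresentedGroup (adjRels H Γ hΓ) →* H)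
    (hδ : ∀ a : Γ, δ (PresentedGroup.of a) = (a : H))
    (x : PresentedGroup (adjRels H Γ hΓ)) (a : Γ) :
    PresentedGroup.of a * x =
      x * PresentedGroup.of (⟨(δ x)⁻¹ * ↑a * δ x, hΓ a a.2 (δ x)⟩ : Γ) := by
  induction x using PresentedGroup.induction_on with
  | H z =>
    induction z using FreeGroup.induction_on generalizing a with
    | C1 =>
      rw [map_one, map_one, one_mul, mul_one]
      exact (of_eq_of (sub_eq _ a.2 (by simp))).symm
    | of b =>
      have hb : (PresentedGroup.mk (adjRels H Γ hΓ)) (FreeGroup.of b) = PresentedGroup.of b := rfl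
      rw [hb, hδ b]
      exact adj_rel a b
    | inv_of b ih =>
      simp only [map_inv]
      set y : PresentedGroup (adjRels H Γ hΓ) := PresentedGroup.mk _ (FreeGroup.of b) with hy
      set d : H := δ y with hd
      set a' : Γ := ⟨d⁻¹⁻¹ * ↑a * d⁻¹, hΓ a a.2 d⁻¹⟩ with ha'
      have h2 : PresentedGroup.of a' * y = y * PresentedGroup.of a := by
        rw [ih a']
        congr 1
        exact of_eq_of (sub_eq _ a.2 (by simp [ha', mul_assoc]))
      have h4 : PresentedGroup.of a' = y * PresentedGroup.of a * y⁻¹ := by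
        rw [eq_mul_inv_iff_mul_eq]
        exact h2
      rw [h4]
      show PresentedGroup.of a * y⁻¹ = y⁻¹ * (y * PresentedGroup.of a * y⁻¹)
      group
    | mul z w ihz ihw =>
      simp only [map_mul]
      rw [← mul_assoc, ihz a, mul_assoc, ihw, ← mul_assoc]
      congr 1
      exact of_eq_of (sub_eq _ _ (by group))

theorem adj_ker_central (δ : PresentedGroup (adjRels H Γ hΓ) →* H)
    (hδ : ∀ a : Γ, δ (PresentedGroup.of a) = (a : H))
    {x : PresentedGroup (adjRels H Γ hΓ)} (hx : δ x = 1)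
    (y : PresentedGroup (adjRels H Γ hΓ)) : x * y = y * x := by
  have hc : ∀ a : Γ, PresentedGroup.of a * x = x * PresentedGroup.of a := by
    intro a
    rw [adj_conj δ hδ x a]
    congr 1
    exact of_eq_of (sub_eq _ a.2 (by rw [hx]; group))
  have hy : y ∈ Subgroup.centralizer {x} := by
    refine PresentedGroup.generated_by _ _ (fun j => ?_) y
    rw [Subgroup.mem_centralizer_iff]
    intro h hh
    rw [Set.mem_singleton_iff] at hh
    subst hh
    exact (hc j).symm
  exact Subgroup.mem_centralizer_iff.mp hy x rfl

end H2AuxProof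

open H2AuxProof commutatorElement in
/-- For `Γ ⊆ G` a conjugation-closed union of conjugacy classes generating the finite group
`G`, the group `H_{2,Γ}(G) = ker (G_Γ → G × G_Γ^{ab})` is isomorphic to
`ker ∂_Γ ∩ [Adj Γ, Adj Γ]`, where `∂_Γ : Adj Γ → G` is induced by `e_g ↦ g` and the map
`G_Γ → G × G_Γ^{ab}` has components the boundary map `α` and the abelianisation. -/
theorem H2Gamma_eq_adj_invariant [Fintype G] (Γ : Set G)
    (hΓ : ∀ a ∈ Γ, ∀ b : G, b⁻¹ * a * b ∈ Γ)
    (hgen : Subgroup.closure Γ = ⊤)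
    (α : (FreeGroup G ⧸ RGamma G Γ) →* G)
    (hα : ∀ g : G, α (QuotientGroup.mk (FreeGroup.of g)) = g)
    (δ : PresentedGroup (adjRels G Γ hΓ) →* G)
    (hδ : ∀ a : Γ, δ (PresentedGroup.of a) = (a : G)) :
    Nonempty
      ((α.prod (Abelianization.of : (FreeGroup G ⧸ RGamma G Γ) →*
          Abelianization (FreeGroup G ⧸ RGamma G Γ))).ker ≃*
        (δ.ker ⊓ commutator (PresentedGroup (adjRels G Γ hΓ)) :
          Subgroup (PresentedGroup (adjRels G Γ hΓ)))) := by
  classical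
  -- δ is surjective
  have hδsurj : Function.Surjective δ := by
    have hrange : δ.range = ⊤ := by
      rw [eq_top_iff, ← hgen, Subgroup.closure_le]
      exact fun g hg => ⟨PresentedGroup.of ⟨g, hg⟩, hδ _⟩
    exact MonoidHom.range_eq_top.mp hrange
  choose sec hsec using hδsurj
  -- a section of δ through the generators
  set s : G → PresentedGroup (adjRels G Γ hΓ) :=
    fun g => if h : g ∈ Γ then PresentedGroup.of ⟨g, h⟩ else sec g with hs_def
  have hsδ : ∀ g, δ (s g) = g := by
    intro g
    by_cases h : g ∈ Γ
    · simp only [hs_def, dif_pos h]; exact hδ _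
    · simp only [hs_def, dif_neg h]; exact hsec g
  have hsΓ : ∀ (g) (h : g ∈ Γ), s g = PresentedGroup.of ⟨g, h⟩ := by
    intro g h; simp only [hs_def, dif_pos h]
  -- the lift ψ₀ : F(G) → Adj Γ
  set ψ₀ : FreeGroup G →* PresentedGroup (adjRels G Γ hΓ) := FreeGroup.lift s with hψ₀def
  have hψ₀of : ∀ g, ψ₀ (FreeGroup.of g) = s g := fun g => FreeGroup.lift_apply_of
  have hδψ₀ : ∀ w, δ (ψ₀ w) = tautProj G w := by
    have h : δ.comp ψ₀ = tautProj G := by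
      apply FreeGroup.ext_hom
      intro g
      rw [MonoidHom.comp_apply, hψ₀of, hsδ]
      simp [tautProj]
    intro w
    exact DFunLike.congr_fun h w
  -- ψ₀ kills R_Γ
  have hker : RGamma G Γ ≤ ψ₀.ker := by
    rw [RGamma]
    apply Subgroup.normalClosure_le_normal
    rintro x (hx | hx)
    · have hle : FRcomm G ≤ ψ₀.ker := by
        rw [FRcomm, Subgroup.commutator_le]
        intro g₁ _ g₂ hg₂
        rw [MonoidHom.mem_ker, map_commutatorElement, commutatorElement_eq_one_iff_commute]
        have h2 : δ (ψ₀ g₂) = 1 := by rw [hδψ₀]; exact hg₂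
        exact (adj_ker_central δ hδ h2 (ψ₀ g₁)).symm
      exact hle hx
    · obtain ⟨a, ha, b, rfl⟩ := hx
      have hcent : PresentedGroup.of (⟨a, ha⟩ : Γ) * s b
          = s b * PresentedGroup.of ⟨b⁻¹ * a * b, hΓ a ha b⟩ := by
        rw [adj_conj δ hδ (s b) ⟨a, ha⟩]
        congr 1
        exact of_eq_of (sub_eq _ _ (by rw [hsδ b]))
      rw [SetLike.mem_coe, MonoidHom.mem_ker]
      simp only [map_mul, map_inv, hψ₀of]
      rw [hsΓ a ha, hsΓ (b⁻¹ * a * b) (hΓ a ha b), hcent]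
      group
  -- the induced map ψ : G_Γ → Adj Γ
  obtain ⟨ψ, hψ⟩ : ∃ ψ : (FreeGroup G ⧸ RGamma G Γ) →* PresentedGroup (adjRels G Γ hΓ),
      ∀ w : FreeGroup G, ψ (QuotientGroup.mk w) = ψ₀ w :=
    ⟨QuotientGroup.lift _ ψ₀ (fun w hw => hker hw), fun _ => rfl⟩
  -- the map φ : Adj Γ → G_Γ
  have hrels : ∀ r ∈ adjRels G Γ hΓ, FreeGroup.lift
      (fun a : Γ => (QuotientGroup.mk (FreeGroup.of (a : G)) : FreeGroup G ⧸ RGamma G Γ)) r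
        = 1 := by
    rintro r ⟨a, b, rfl⟩
    have hmem : (FreeGroup.of (a : G) * FreeGroup.of (b : G) *
        (FreeGroup.of ((b : G)⁻¹ * a * b))⁻¹ * (FreeGroup.of (b : G))⁻¹) ∈ RGamma G Γ :=
      Subgroup.subset_normalClosure (Or.inr ⟨a, a.2, b, rfl⟩)
    have h1 : (QuotientGroup.mk' (RGamma G Γ)) (FreeGroup.of (a : G) * FreeGroup.of (b : G) *
        (FreeGroup.of ((b : G)⁻¹ * a * b))⁻¹ * (FreeGroup.of (b : G))⁻¹) = 1 :=
      (QuotientGroup.eq_one_iff _).2 hmem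
    simp only [map_mul, map_inv, FreeGroup.lift_apply_of] at h1 ⊢
    exact h1
  obtain ⟨φ, hφ⟩ : ∃ φ : PresentedGroup (adjRels G Γ hΓ) →* FreeGroup G ⧸ RGamma G Γ,
      ∀ a : Γ, φ (PresentedGroup.of a) = QuotientGroup.mk (FreeGroup.of (a : G)) :=
    ⟨PresentedGroup.toGroup hrels, fun _ => PresentedGroup.toGroup.of hrels⟩
  -- compatibilities
  have hαmk : ∀ w, α (QuotientGroup.mk w) = tautProj G w := by
    have h : α.comp (QuotientGroup.mk' (RGamma G Γ)) = tautProj G := by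
      apply FreeGroup.ext_hom
      intro g
      have h0 : (QuotientGroup.mk' (RGamma G Γ)) (FreeGroup.of g)
          = QuotientGroup.mk (FreeGroup.of g) := rfl
      rw [MonoidHom.comp_apply, h0, hα]
      exact (FreeGroup.lift_apply_of (f := @id G)).symm
    intro w
    exact DFunLike.congr_fun h w
  have hαφ : ∀ y, α (φ y) = δ y := by
    have h : α.comp φ = δ := by
      apply PresentedGroup.ext
      intro a
      rw [MonoidHom.comp_apply, hφ, hα, hδ]
    intro y
    exact DFunLike.congr_fun h y
  have hδψ : ∀ x, δ (ψ x) = α x := by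
    intro x
    induction x using QuotientGroup.induction_on with
    | H w => rw [hψ, hδψ₀, hαmk]
  have hψφ : ∀ y, ψ (φ y) = y := by
    have h : ψ.comp φ = MonoidHom.id _ := by
      apply PresentedGroup.ext
      intro a
      rw [MonoidHom.comp_apply, hφ, MonoidHom.id_apply, hψ, hψ₀of, hsΓ _ a.2]
    intro y
    exact DFunLike.congr_fun h y
  -- ker α is central in G_Γ
  have hGcent : ∀ x : FreeGroup G ⧸ RGamma G Γ, α x = 1 → ∀ y, x * y = y * x := by
    intro x hx y
    induction x using QuotientGroup.induction_on with
    | H w =>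
      induction y using QuotientGroup.induction_on with
      | H v =>
        have hw : w ∈ Rrel G := by
          have : tautProj G w = 1 := by rw [← hαmk]; exact hx
          exact this
        have hcomm : (⁅v, w⁆ : FreeGroup G) ∈ RGamma G Γ :=
          Subgroup.subset_normalClosure
            (Or.inl (Subgroup.commutator_mem_commutator (Subgroup.mem_top v) hw))
        have h1 : (QuotientGroup.mk' (RGamma G Γ)) ⁅v, w⁆ = 1 :=
          (QuotientGroup.eq_one_iff _).2 hcomm
        rw [map_commutatorElement] at h1
        have h2 := commutatorElement_eq_one_iff_commute.mp h1
        exact h2.symm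
  -- the defect homomorphism D x = φ (ψ x) * x⁻¹
  have hθcent : ∀ x : FreeGroup G ⧸ RGamma G Γ, α (φ (ψ x) * x⁻¹) = 1 := by
    intro x
    rw [map_mul, map_inv, hαφ, hδψ]
    simp
  obtain ⟨D, hD⟩ : ∃ D : (FreeGroup G ⧸ RGamma G Γ) →* (FreeGroup G ⧸ RGamma G Γ),
      ∀ x, D x = φ (ψ x) * x⁻¹ := by
    refine ⟨{ toFun := fun x => φ (ψ x) * x⁻¹, map_one' := by simp, map_mul' := ?_ },
      fun _ => rfl⟩
    intro x y
    have h := hGcent (φ (ψ y) * y⁻¹) (hθcent y) x⁻¹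
    calc φ (ψ (x * y)) * (x * y)⁻¹
        = φ (ψ x) * (φ (ψ y) * y⁻¹ * x⁻¹) := by rw [map_mul, map_mul]; group
      _ = φ (ψ x) * (x⁻¹ * (φ (ψ y) * y⁻¹)) := by rw [h]
      _ = φ (ψ x) * x⁻¹ * (φ (ψ y) * y⁻¹) := by group
  have hDcomm : ∀ x ∈ commutator (FreeGroup G ⧸ RGamma G Γ), φ (ψ x) = x := by
    have hle : commutator (FreeGroup G ⧸ RGamma G Γ) ≤ D.ker := by
      rw [commutator_def, Subgroup.commutator_le]
      intro g₁ _ g₂ _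
      rw [MonoidHom.mem_ker, map_commutatorElement, commutatorElement_eq_one_iff_commute]
      exact hGcent (D g₁) (by rw [hD]; exact hθcent g₁) (D g₂)
    intro x hx
    have h1 : D x = 1 := hle hx
    rw [hD] at h1
    exact mul_inv_eq_one.mp h1
  -- membership characterisation of the left kernel
  have hkmem : ∀ x : FreeGroup G ⧸ RGamma G Γ,
      x ∈ (α.prod (Abelianization.of : (FreeGroup G ⧸ RGamma G Γ) →*
          Abelianization (FreeGroup G ⧸ RGamma G Γ))).ker ↔
        α x = 1 ∧ x ∈ commutator (FreeGroup G ⧸ RGamma G Γ) := by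
    intro x
    rw [MonoidHom.mem_ker, MonoidHom.prod_apply, Prod.mk_eq_one]
    have h2 : ((Abelianization.of :
        (FreeGroup G ⧸ RGamma G Γ) →* Abelianization (FreeGroup G ⧸ RGamma G Γ)) x = 1) ↔
        x ∈ commutator (FreeGroup G ⧸ RGamma G Γ) :=
      QuotientGroup.eq_one_iff x
    rw [h2]
  -- assemble the isomorphism
  exact ⟨{
    toFun := fun x => ⟨ψ (x : FreeGroup G ⧸ RGamma G Γ),
      Subgroup.mem_inf.mpr
        ⟨by rw [MonoidHom.mem_ker, hδψ]; exact ((hkmem _).mp x.2).1,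
         mem_commutator_map ψ ((hkmem _).mp x.2).2⟩⟩,
    invFun := fun y => ⟨φ (y : PresentedGroup (adjRels G Γ hΓ)),
      (hkmem _).mpr
        ⟨by rw [hαφ]; exact (Subgroup.mem_inf.mp y.2).1,
         mem_commutator_map φ (Subgroup.mem_inf.mp y.2).2⟩⟩,
    left_inv := fun x => Subtype.ext (hDcomm _ ((hkmem _).mp x.2).2),
    right_inv := fun y => Subtype.ext (hψφ _),
    map_mul' := fun x y => Subtype.ext (map_mul ψ _ _) }⟩
end

section
/- Let G be a finite group and Γ ⊆ G a union of nontrivial conjugacy classes. Then the central extension 1 → R/R_Γ → G_Γ → G → 1 is exact, i.e., R_Γ ⊆ R, the kernel of the boundary map G_Γ → G equals R/R_Γ, and this kernel is contained in the center of G_Γ. -/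
variable (G : Type*) [Group G]

/-- The tautological central extension `1 → R/R_Γ → G_Γ → G → 1` is exact: for a union
`Γ` of nontrivial conjugacy classes of a finite group `G`, one has `R_Γ ⊆ R`, the kernel of
the boundary map `G_Γ → G` equals the image `R/R_Γ` of `R`, and this kernel is contained in
the center of `G_Γ`. -/
theorem tautological_central_extension [Fintype G] (Γ : Set G)
    (hΓ : ∀ a ∈ Γ, ∀ b : G, b⁻¹ * a * b ∈ Γ) (hone : (1 : G) ∉ Γ)
    (α : (FreeGroup G ⧸ RGamma G Γ) →* G)
    (hα : ∀ g : G, α (QuotientGroup.mk (FreeGroup.of g)) = g) :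
    RGamma G Γ ≤ Rrel G ∧
    α.ker = Subgroup.map (QuotientGroup.mk' (RGamma G Γ)) (Rrel G) ∧
    α.ker ≤ Subgroup.center (FreeGroup G ⧸ RGamma G Γ) := by

  -- `α ∘ mk = tautProj`
  have key : α.comp (QuotientGroup.mk' (RGamma G Γ)) = tautProj G := by
    apply FreeGroup.ext_hom
    intro g
    simp [hα g, tautProj]
  haveI : (Rrel G).Normal := MonoidHom.normal_ker _
  have h1 : RGamma G Γ ≤ Rrel G := by
    apply Subgroup.normalClosure_le_normal
    rintro x (hx | ⟨a, _, b, rfl⟩)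
    · exact Subgroup.commutator_le_right ⊤ (Rrel G) hx
    · rw [SetLike.mem_coe, Rrel, MonoidHom.mem_ker]
      simp only [tautProj, map_mul, map_inv, FreeGroup.lift_apply_of, id_eq]
      group
  have hcomap : Subgroup.comap (QuotientGroup.mk' (RGamma G Γ)) α.ker = Rrel G := by
    rw [MonoidHom.comap_ker, key]; rfl
  have h2 : α.ker = Subgroup.map (QuotientGroup.mk' (RGamma G Γ)) (Rrel G) := by
    rw [← hcomap, Subgroup.map_comap_eq_self_of_surjective]
    exact QuotientGroup.mk'_surjective _
  refine ⟨h1, h2, ?_⟩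
  rw [h2]
  rintro _ ⟨y, hy, rfl⟩
  rw [Subgroup.mem_center_iff]
  intro g
  obtain ⟨z, rfl⟩ := QuotientGroup.mk'_surjective (RGamma G Γ) g
  rw [← map_mul, ← map_mul]
  apply (QuotientGroup.mk'_eq_mk' _).mpr
  refine ⟨(z * y)⁻¹ * (y * z), ?_, by group⟩
  open scoped commutatorElement in
  have : (z * y)⁻¹ * (y * z) = ⁅y⁻¹, z⁻¹⁆ := by group
  rw [this]
  apply Subgroup.subset_normalClosure
  apply Set.mem_union_left
  have : (FRcomm G : Subgroup (FreeGroup G)) = ⁅Rrel G, (⊤ : Subgroup (FreeGroup G))⁆ := by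
    rw [FRcomm, Subgroup.commutator_comm]
  rw [SetLike.mem_coe, this]
  exact Subgroup.commutator_mem_commutator (inv_mem hy) (Subgroup.mem_top _)
end

section
/- Let G be a finite group, Γ ⊆ G a union of nontrivial conjugacy classes, G_Γ = F/R_Γ as in the tautological central extension. Then there is a short exact sequence 1 → (R_Γ ∩ [F,F])/[F,R] → H_2(G,ℤ) → H_{2,Γ}(G) → 1; in particular H_{2,Γ}(G) is an abelian group. -/
variable (G : Type*) [Group G]

instance : (Rrel G).Normal := MonoidHom.normal_ker _

instance (K : Subgroup (FreeGroup G)) : ((FRcomm G).subgroupOf K).Normal :=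
  Subgroup.Normal.subgroupOf (Subgroup.commutator_normal ⊤ (Rrel G)) K

/-- Hopf's formula: `H₂(G,ℤ) = (R ∩ [F,F]) / [F,R]`. -/
abbrev H2 := (Rrel G ⊓ commutator (FreeGroup G) : Subgroup (FreeGroup G)) ⧸
  (FRcomm G).subgroupOf (Rrel G ⊓ commutator (FreeGroup G))

/-- The group `(R_Γ ∩ [F,F]) / [F,R]`. -/
abbrev HKer (Γ : Set G) := (RGamma G Γ ⊓ commutator (FreeGroup G) : Subgroup (FreeGroup G)) ⧸
  (FRcomm G).subgroupOf (RGamma G Γ ⊓ commutator (FreeGroup G))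

open scoped commutatorElement

lemma FRcomm_le_Rrel : FRcomm G ≤ Rrel G := Subgroup.commutator_le_right _ _

lemma FRcomm_le_RGamma (Γ : Set G) : FRcomm G ≤ RGamma G Γ :=
  fun _ hx => Subgroup.subset_normalClosure (Or.inl hx)

lemma RGamma_le_Rrel (Γ : Set G) : RGamma G Γ ≤ Rrel G := by
  apply Subgroup.normalClosure_le_normal
  rintro x (hx | ⟨a, _, b, rfl⟩)
  · exact FRcomm_le_Rrel G hx
  · show tautProj G _ = 1
    simp [tautProj, mul_assoc]

/-- For a union `Γ` of nontrivial conjugacy classes of the finite group `G`, there is a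
short exact sequence `1 → (R_Γ ∩ [F,F])/[F,R] → H₂(G,ℤ) → H_{2,Γ}(G) → 1`, where
`H₂(G,ℤ) = (R ∩ [F,F])/[F,R]` by Hopf's formula and
`H_{2,Γ}(G) = ker (G_Γ → G × G_Γ^{ab})`; in particular `H_{2,Γ}(G)` is abelian. -/
theorem H2_to_H2Gamma_exact [Fintype G] (Γ : Set G)
    (hΓ : ∀ a ∈ Γ, ∀ b : G, b⁻¹ * a * b ∈ Γ) (hone : (1 : G) ∉ Γ)
    (α : (FreeGroup G ⧸ RGamma G Γ) →* G)
    (hα : ∀ g : G, α (QuotientGroup.mk (FreeGroup.of g)) = g) :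
    ∃ f : H2 G →* (α.prod (Abelianization.of : (FreeGroup G ⧸ RGamma G Γ) →*
        Abelianization (FreeGroup G ⧸ RGamma G Γ))).ker,
      Function.Surjective f ∧
      Nonempty (f.ker ≃* HKer G Γ) ∧
      ∀ x y : (α.prod (Abelianization.of : (FreeGroup G ⧸ RGamma G Γ) →*
        Abelianization (FreeGroup G ⧸ RGamma G Γ))).ker, x * y = y * x := by
  classical
  set N := RGamma G Γ with hN
  let mkN : FreeGroup G →* FreeGroup G ⧸ RGamma G Γ := QuotientGroup.mk' (RGamma G Γ)
  have hcomp : ∀ x : FreeGroup G, α (mkN x) = tautProj G x := by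
    intro x
    have : α.comp mkN = tautProj G :=
      FreeGroup.ext_hom _ _ (fun g => by simpa [mkN, tautProj] using hα g)
    exact DFunLike.congr_fun this x
  -- ker α is central
  have hcent : ∀ y : FreeGroup G ⧸ RGamma G Γ, α y = 1 → ∀ z, z * y = y * z := by
    intro y hy z
    obtain ⟨x, rfl⟩ := QuotientGroup.mk_surjective y
    obtain ⟨w, rfl⟩ := QuotientGroup.mk_surjective z
    have hx : x ∈ Rrel G := by
      rw [Rrel, MonoidHom.mem_ker, ← hcomp]; exact hy
    have hmem : ⁅x⁻¹, w⁻¹⁆ ∈ FRcomm G := by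
      rw [FRcomm, Subgroup.commutator_comm]
      exact Subgroup.commutator_mem_commutator ((Rrel G).inv_mem hx) (Subgroup.mem_top _)
    have h1 : QuotientGroup.mk (w * x) = (QuotientGroup.mk (x * w) : FreeGroup G ⧸ RGamma G Γ) := by
      rw [QuotientGroup.eq]
      have : (w * x)⁻¹ * (x * w) = ⁅x⁻¹, w⁻¹⁆ := by group
      rw [this]
      exact FRcomm_le_RGamma G Γ hmem
    simpa [QuotientGroup.mk_mul] using h1
  -- the subgroup K and target T
  set K : Subgroup (FreeGroup G) := Rrel G ⊓ commutator (FreeGroup G) with hK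
  set T := (α.prod (Abelianization.of : (FreeGroup G ⧸ RGamma G Γ) →*
        Abelianization (FreeGroup G ⧸ RGamma G Γ))).ker with hT
  have hmemT : ∀ x : FreeGroup G, x ∈ K → mkN x ∈ T := by
    rintro x ⟨hx1, hx2⟩
    rw [hT, MonoidHom.mem_ker, MonoidHom.prod_apply, Prod.mk_eq_one]
    refine ⟨by rw [hcomp]; exact hx1, ?_⟩
    show (QuotientGroup.mk (mkN x) : Abelianization _) = 1
    rw [QuotientGroup.eq_one_iff]
    have : mkN x ∈ Subgroup.map mkN (commutator (FreeGroup G)) := ⟨x, hx2, rfl⟩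
    rw [commutator_def, Subgroup.map_commutator] at this
    exact Subgroup.commutator_mono le_top le_top this
  let φ : K →* T := MonoidHom.codRestrict (mkN.comp K.subtype) T
    (fun x => hmemT x.1 x.2)
  have hφval : ∀ x : K, (φ x : FreeGroup G ⧸ RGamma G Γ) = QuotientGroup.mk x.1 := fun _ => rfl
  let f : H2 G →* T := QuotientGroup.lift ((FRcomm G).subgroupOf K) φ (by
    intro x hx
    have : x.1 ∈ RGamma G Γ := FRcomm_le_RGamma G Γ hx
    ext
    rw [hφval]
    exact (QuotientGroup.eq_one_iff _).mpr this)
  have hfmk : ∀ x : K, f (QuotientGroup.mk x) = φ x := fun _ => rfl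
  -- surjectivity
  have hsurj : Function.Surjective f := by
    rintro ⟨y, hy⟩
    rw [MonoidHom.mem_ker, MonoidHom.prod_apply, Prod.mk_eq_one] at hy
    obtain ⟨hy1, hy2⟩ := hy
    have hycomm : y ∈ commutator (FreeGroup G ⧸ RGamma G Γ) := by
      rw [← QuotientGroup.eq_one_iff]
      exact hy2
    have : commutator (FreeGroup G ⧸ RGamma G Γ) = Subgroup.map mkN (commutator (FreeGroup G)) := by
      rw [commutator_def, commutator_def, Subgroup.map_commutator,
        Subgroup.map_top_of_surjective mkN (QuotientGroup.mk'_surjective _)]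
    rw [this] at hycomm
    obtain ⟨c, hc, hcy⟩ := hycomm
    have hcr : c ∈ Rrel G := by
      rw [Rrel, MonoidHom.mem_ker, ← hcomp, hcy, hy1]
    refine ⟨QuotientGroup.mk ⟨c, hcr, hc⟩, ?_⟩
    rw [hfmk]
    exact Subtype.ext (by rw [hφval]; exact hcy)
  -- the kernel
  have hle : RGamma G Γ ⊓ commutator (FreeGroup G) ≤ K :=
    inf_le_inf_right _ (RGamma_le_Rrel G Γ)
  let ι := Subgroup.inclusion hle
  let g : HKer G Γ →* H2 G := QuotientGroup.lift _ ((QuotientGroup.mk' ((FRcomm G).subgroupOf K)).comp ι) (by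
    intro x hx
    show (QuotientGroup.mk (ι x) : H2 G) = 1
    rw [QuotientGroup.eq_one_iff, Subgroup.mem_subgroupOf, Subgroup.coe_inclusion]
    exact hx)
  have hgmk : ∀ x : (RGamma G Γ ⊓ commutator (FreeGroup G) : Subgroup (FreeGroup G)),
      g (QuotientGroup.mk x) = QuotientGroup.mk (ι x) := fun _ => rfl
  have hker : ∀ u, g u ∈ f.ker := by
    intro u
    obtain ⟨x, rfl⟩ := QuotientGroup.mk_surjective u
    rw [MonoidHom.mem_ker, hgmk, hfmk]
    ext
    rw [hφval]
    exact (QuotientGroup.eq_one_iff _).mpr x.2.1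
  let g' : HKer G Γ →* f.ker := MonoidHom.codRestrict g f.ker hker
  have hinj : Function.Injective g' := by
    rw [← MonoidHom.ker_eq_bot_iff, Subgroup.eq_bot_iff_forall]
    intro u hu
    obtain ⟨x, rfl⟩ := QuotientGroup.mk_surjective u
    rw [MonoidHom.mem_ker] at hu
    have hg1 : g (QuotientGroup.mk x) = 1 := congrArg Subtype.val hu
    rw [hgmk, QuotientGroup.eq_one_iff, Subgroup.mem_subgroupOf] at hg1
    rw [QuotientGroup.eq_one_iff, Subgroup.mem_subgroupOf]
    exact hg1
  have hsurj' : Function.Surjective g' := by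
    rintro ⟨u, hu⟩
    obtain ⟨x, rfl⟩ := QuotientGroup.mk_surjective u
    rw [MonoidHom.mem_ker, hfmk] at hu
    have hval : (QuotientGroup.mk x.1 : FreeGroup G ⧸ RGamma G Γ) = 1 := by
      rw [← hφval]; exact congrArg Subtype.val hu
    have hxN : x.1 ∈ RGamma G Γ := (QuotientGroup.eq_one_iff _).mp hval
    refine ⟨QuotientGroup.mk ⟨x.1, hxN, x.2.2⟩, ?_⟩
    ext
    show g _ = _
    rw [hgmk]
    congr 1
  refine ⟨f, hsurj, ⟨(MulEquiv.ofBijective g' ⟨hinj, hsurj'⟩).symm⟩, ?_⟩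
  rintro ⟨x, hx⟩ ⟨y, hy⟩
  rw [MonoidHom.mem_ker, MonoidHom.prod_apply, Prod.mk_eq_one] at hx
  ext
  exact (hcent x hx.1 y).symm
end

section
/- Let G be a finite group and Γ = C₁ ∪ … ∪ C_t a union of distinct conjugacy classes, with g₁,…,g_r the elements of G \ Γ. Then the abelianisation of G_Γ = F/R_Γ is a free abelian group of rank t + r, with basis given by the classes of the conjugacy classes C₁,…,C_t and of the elements g₁,…,g_r. -/
variable (G : Type*) [Group G]

/-! ### Auxiliary constructions -/

/-- The index type for the basis. -/
abbrev Idx (Γ : Set G) :=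
  {C : ConjClasses G // ∃ a ∈ Γ, ConjClasses.mk a = C} ⊕ {g : G // g ∉ Γ}

open Classical in
/-- Index attached to a group element. -/
noncomputable def idx (Γ : Set G) (g : G) : Idx G Γ :=
  if h : g ∈ Γ then Sum.inl ⟨ConjClasses.mk g, ⟨g, h, rfl⟩⟩ else Sum.inr ⟨g, h⟩

/-- The hom from the free group to the free abelian group on the index set. -/
noncomputable def phiF (Γ : Set G) : FreeGroup G →* Multiplicative (Idx G Γ →₀ ℤ) :=
  FreeGroup.lift (fun g => Multiplicative.ofAdd (Finsupp.single (idx G Γ g) 1))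

lemma phiF_of (Γ : Set G) (g : G) :
    phiF G Γ (FreeGroup.of g) = Multiplicative.ofAdd (Finsupp.single (idx G Γ g) 1) := by
  simp [phiF]

lemma idx_conj (Γ : Set G) (hΓ : ∀ a ∈ Γ, ∀ b : G, b⁻¹ * a * b ∈ Γ)
    (a : G) (ha : a ∈ Γ) (b : G) : idx G Γ (b⁻¹ * a * b) = idx G Γ a := by
  have hc : b⁻¹ * a * b ∈ Γ := hΓ a ha b
  have hconj : ConjClasses.mk (b⁻¹ * a * b) = ConjClasses.mk a := by
    rw [ConjClasses.mk_eq_mk_iff_isConj, isConj_iff]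
    exact ⟨b, by group⟩
  simp only [idx, dif_pos hc, dif_pos ha, hconj]

lemma RGamma_le_ker_phiF (Γ : Set G) (hΓ : ∀ a ∈ Γ, ∀ b : G, b⁻¹ * a * b ∈ Γ) :
    RGamma G Γ ≤ (phiF G Γ).ker := by
  apply Subgroup.normalClosure_le_normal
  rintro x (hx | hx)
  · have hle : FRcomm G ≤ (phiF G Γ).ker := by
      rw [FRcomm, Subgroup.commutator_le]
      intro g₁ _ g₂ _
      rw [MonoidHom.mem_ker, map_commutatorElement,
        commutatorElement_eq_one_iff_commute]
      exact Commute.all _ _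
    exact hle hx
  · obtain ⟨a, ha, b, rfl⟩ := hx
    show _ ∈ (phiF G Γ).ker
    rw [MonoidHom.mem_ker]
    simp only [map_mul, map_inv, phiF_of, idx_conj G Γ hΓ a ha b]
    rw [mul_right_comm, mul_inv_cancel_right, mul_inv_cancel]

/-- The canonical map from the free group to the abelianization of `G_Γ`. -/
def eta (Γ : Set G) : FreeGroup G →* Abelianization (FreeGroup G ⧸ RGamma G Γ) :=
  Abelianization.of.comp (QuotientGroup.mk' (RGamma G Γ))

lemma eta_conj (Γ : Set G) (a : G) (ha : a ∈ Γ) (b : G) :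
    eta G Γ (FreeGroup.of (b⁻¹ * a * b)) = eta G Γ (FreeGroup.of a) := by
  have hmem : FreeGroup.of a * FreeGroup.of b *
      (FreeGroup.of (b⁻¹ * a * b))⁻¹ * (FreeGroup.of b)⁻¹ ∈ RGamma G Γ :=
    Subgroup.subset_normalClosure (Set.mem_union_right _ ⟨a, ha, b, rfl⟩)
  have h1 : eta G Γ (FreeGroup.of a * FreeGroup.of b *
      (FreeGroup.of (b⁻¹ * a * b))⁻¹ * (FreeGroup.of b)⁻¹) = 1 := by
    simp only [eta, MonoidHom.comp_apply, QuotientGroup.mk'_apply]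
    rw [(QuotientGroup.eq_one_iff _).mpr hmem, map_one]
  set A := eta G Γ (FreeGroup.of a)
  set B := eta G Γ (FreeGroup.of b)
  set C := eta G Γ (FreeGroup.of (b⁻¹ * a * b))
  have h2 : A * B * C⁻¹ * B⁻¹ = 1 := by
    simpa only [map_mul, map_inv] using h1
  have h3 : A * B * C⁻¹ = B := by rwa [mul_inv_eq_one] at h2
  have h4 : A * C⁻¹ * B = B := by rwa [mul_right_comm] at h3
  have h5 : A * C⁻¹ = 1 := mul_eq_right.mp h4
  exact (mul_inv_eq_one.mp h5).symm

lemma eta_of_isConj (Γ : Set G) (a : G) (ha : a ∈ Γ) (g : G)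
    (h : ConjClasses.mk a = ConjClasses.mk g) :
    eta G Γ (FreeGroup.of g) = eta G Γ (FreeGroup.of a) := by
  rw [ConjClasses.mk_eq_mk_iff_isConj, isConj_iff] at h
  obtain ⟨c, hc⟩ := h
  have : g = (c⁻¹)⁻¹ * a * c⁻¹ := by rw [inv_inv]; rw [← hc]
  rw [this]
  exact eta_conj G Γ a ha c⁻¹

/-- A representative element for each index. -/
noncomputable def rep (Γ : Set G) : Idx G Γ → G
  | Sum.inl ⟨_, h⟩ => h.choose
  | Sum.inr ⟨g, _⟩ => g

lemma rep_inl_mem (Γ : Set G) (C : ConjClasses G) (h : ∃ a ∈ Γ, ConjClasses.mk a = C) :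
    rep G Γ (Sum.inl ⟨C, h⟩) ∈ Γ := h.choose_spec.1

lemma rep_inl_mk (Γ : Set G) (C : ConjClasses G) (h : ∃ a ∈ Γ, ConjClasses.mk a = C) :
    ConjClasses.mk (rep G Γ (Sum.inl ⟨C, h⟩)) = C := h.choose_spec.2

lemma idx_rep (Γ : Set G) (i : Idx G Γ) : idx G Γ (rep G Γ i) = i := by
  rcases i with ⟨C, h⟩ | ⟨g, hg⟩
  · have h1 := rep_inl_mem G Γ C h
    have h2 := rep_inl_mk G Γ C h
    simp only [idx, dif_pos h1]
    congr 1
    exact Subtype.ext h2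
  · simp only [idx, rep, dif_neg hg]
    exact dif_neg hg

/-- The candidate basis elements. -/
noncomputable def E (Γ : Set G) (i : Idx G Γ) :
    Additive (Abelianization (FreeGroup G ⧸ RGamma G Γ)) :=
  Additive.ofMul (eta G Γ (FreeGroup.of (rep G Γ i)))

lemma E_idx (Γ : Set G) (g : G) :
    E G Γ (idx G Γ g) = Additive.ofMul (eta G Γ (FreeGroup.of g)) := by
  by_cases hg : g ∈ Γ
  · simp only [idx, dif_pos hg, E]
    congr 1
    exact (eta_of_isConj G Γ _ (rep_inl_mem G Γ _ _) g (rep_inl_mk G Γ _ _)).symm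
  · simp only [idx, dif_neg hg, E, rep]

/-- The induced hom on the abelianization. -/
noncomputable def phiA (Γ : Set G) (hΓ : ∀ a ∈ Γ, ∀ b : G, b⁻¹ * a * b ∈ Γ) :
    Abelianization (FreeGroup G ⧸ RGamma G Γ) →* Multiplicative (Idx G Γ →₀ ℤ) :=
  Abelianization.lift (QuotientGroup.lift (RGamma G Γ) (phiF G Γ)
    (fun _ hx => RGamma_le_ker_phiF G Γ hΓ hx))

lemma phiA_eta (Γ : Set G) (hΓ : ∀ a ∈ Γ, ∀ b : G, b⁻¹ * a * b ∈ Γ) (w : FreeGroup G) :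
    phiA G Γ hΓ (eta G Γ w) = phiF G Γ w := by
  simp [phiA, eta, Abelianization.lift_apply_of]

/-- The additive version of `phiA`. -/
noncomputable def phi (Γ : Set G) (hΓ : ∀ a ∈ Γ, ∀ b : G, b⁻¹ * a * b ∈ Γ) :
    Additive (Abelianization (FreeGroup G ⧸ RGamma G Γ)) →+ (Idx G Γ →₀ ℤ) where
  toFun x := Multiplicative.toAdd (phiA G Γ hΓ (Additive.toMul x))
  map_zero' := by
    show Multiplicative.toAdd (phiA G Γ hΓ 1) = 0
    rw [map_one]; rfl
  map_add' x y := by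
    show Multiplicative.toAdd (phiA G Γ hΓ (Additive.toMul x * Additive.toMul y)) = _
    rw [map_mul]; rfl

/-- The inverse map. -/
noncomputable def psi (Γ : Set G) :
    (Idx G Γ →₀ ℤ) →+ Additive (Abelianization (FreeGroup G ⧸ RGamma G Γ)) :=
  Finsupp.liftAddHom (fun i => zmultiplesHom _ (E G Γ i))

lemma psi_single_one (Γ : Set G) (i : Idx G Γ) :
    psi G Γ (Finsupp.single i 1) = E G Γ i := by
  simp [psi, Finsupp.liftAddHom_apply_single]

lemma phi_E (Γ : Set G) (hΓ : ∀ a ∈ Γ, ∀ b : G, b⁻¹ * a * b ∈ Γ) (i : Idx G Γ) :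
    phi G Γ hΓ (E G Γ i) = Finsupp.single i 1 := by
  show (phiA G Γ hΓ (eta G Γ (FreeGroup.of (rep G Γ i)))).toAdd = _
  rw [phiA_eta, phiF_of, idx_rep]
  rfl

lemma left_inv_aux (Γ : Set G) (hΓ : ∀ a ∈ Γ, ∀ b : G, b⁻¹ * a * b ∈ Γ)
    (x : Additive (Abelianization (FreeGroup G ⧸ RGamma G Γ))) :
    psi G Γ (phi G Γ hΓ x) = x := by
  have hofsurj : Function.Surjective
      (Abelianization.of : (FreeGroup G ⧸ RGamma G Γ) →* _) := fun y =>
    Quotient.inductionOn y (fun q => ⟨q, rfl⟩)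
  have hsurj : Function.Surjective (eta G Γ) := by
    intro y
    obtain ⟨q, rfl⟩ := hofsurj y
    obtain ⟨w, rfl⟩ := QuotientGroup.mk'_surjective (RGamma G Γ) q
    exact ⟨w, rfl⟩
  obtain ⟨w, rfl⟩ := hsurj x.toMul
  show psi G Γ (phi G Γ hΓ (Additive.ofMul (eta G Γ w))) = Additive.ofMul (eta G Γ w)
  induction w using FreeGroup.induction_on with
  | C1 => simp only [map_one]; simp
  | of g =>
    show psi G Γ ((phiA G Γ hΓ (eta G Γ (FreeGroup.of g))).toAdd) = _
    rw [phiA_eta, phiF_of]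
    show psi G Γ (Finsupp.single (idx G Γ g) 1) = _
    rw [psi_single_one, E_idx]
  | inv_of g ih =>
    show psi G Γ ((phiA G Γ hΓ (eta G Γ (FreeGroup.of g)⁻¹)).toAdd) = _
    rw [map_inv, map_inv]
    show psi G Γ (- (phiA G Γ hΓ (eta G Γ (FreeGroup.of g))).toAdd) = _
    rw [map_neg]
    have := ih
    rw [show psi G Γ ((phiA G Γ hΓ (eta G Γ (FreeGroup.of g))).toAdd)
      = Additive.ofMul (eta G Γ (FreeGroup.of g)) from ih]
    rfl
  | mul x y ihx ihy =>
    show psi G Γ ((phiA G Γ hΓ (eta G Γ (x * y))).toAdd) = _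
    rw [map_mul, map_mul]
    show psi G Γ ((phiA G Γ hΓ (eta G Γ x)).toAdd + (phiA G Γ hΓ (eta G Γ y)).toAdd) = _
    rw [map_add]
    exact congrArg₂ (· + ·) ihx ihy

lemma right_inv_aux (Γ : Set G) (hΓ : ∀ a ∈ Γ, ∀ b : G, b⁻¹ * a * b ∈ Γ)
    (f : Idx G Γ →₀ ℤ) : phi G Γ hΓ (psi G Γ f) = f := by
  have h : (phi G Γ hΓ).comp (psi G Γ) = AddMonoidHom.id _ := by
    apply Finsupp.addHom_ext
    intro i n
    simp only [AddMonoidHom.coe_comp, Function.comp_apply, AddMonoidHom.id_apply]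
    rw [show (psi G Γ) (Finsupp.single i n) = n • E G Γ i by
      simp [psi, Finsupp.liftAddHom_apply_single]]
    rw [map_zsmul, phi_E, Finsupp.smul_single, smul_eq_mul, mul_one]
  exact DFunLike.congr_fun h f

/-- The abelianization as an `AddEquiv` with the free abelian group on `Idx`. -/
noncomputable def theEquiv (Γ : Set G) (hΓ : ∀ a ∈ Γ, ∀ b : G, b⁻¹ * a * b ∈ Γ) :
    Additive (Abelianization (FreeGroup G ⧸ RGamma G Γ)) ≃+ (Idx G Γ →₀ ℤ) :=
  { toFun := phi G Γ hΓ
    invFun := psi G Γ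
    left_inv := left_inv_aux G Γ hΓ
    right_inv := right_inv_aux G Γ hΓ
    map_add' := map_add _ }

/-- For a finite group `G` and a union `Γ = C₁ ∪ … ∪ C_t` of distinct conjugacy classes,
with `g₁, …, g_r` the elements of `G \ Γ`, the abelianisation of `G_Γ = F/R_Γ` is free
abelian of rank `t + r`, with basis given by the classes of the conjugacy classes contained
in `Γ` and of the elements of `G \ Γ`. -/
theorem abelianization_GGamma_free [Fintype G] (Γ : Set G)
    (hΓ : ∀ a ∈ Γ, ∀ b : G, b⁻¹ * a * b ∈ Γ) :
    ∃ B : Module.Basis ({C : ConjClasses G // ∃ a ∈ Γ, ConjClasses.mk a = C} ⊕ {g : G // g ∉ Γ}) ℤ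
        (Additive (Abelianization (FreeGroup G ⧸ RGamma G Γ))),
      (∀ (a : G) (h : a ∈ Γ),
        B (Sum.inl ⟨ConjClasses.mk a, ⟨a, h, rfl⟩⟩) =
          Additive.ofMul (Abelianization.of (QuotientGroup.mk (FreeGroup.of a)))) ∧
      (∀ (g : G) (h : g ∉ Γ),
        B (Sum.inr ⟨g, h⟩) =
          Additive.ofMul (Abelianization.of (QuotientGroup.mk (FreeGroup.of g)))) := by
  refine ⟨Module.Basis.ofRepr (theEquiv G Γ hΓ).toIntLinearEquiv, ?_, ?_⟩
  · intro a h
    have hB : (Module.Basis.ofRepr (theEquiv G Γ hΓ).toIntLinearEquiv)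
        (Sum.inl ⟨ConjClasses.mk a, ⟨a, h, rfl⟩⟩)
        = psi G Γ (Finsupp.single (Sum.inl ⟨ConjClasses.mk a, ⟨a, h, rfl⟩⟩) 1) := by
      rw [← Module.Basis.repr_symm_single_one]
      rfl
    rw [hB, psi_single_one]
    show Additive.ofMul (eta G Γ (FreeGroup.of (rep G Γ _))) = _
    congr 1
    exact (eta_of_isConj G Γ _ (rep_inl_mem G Γ _ _) a (rep_inl_mk G Γ _ _)).symm
  · intro g h
    have hB : (Module.Basis.ofRepr (theEquiv G Γ hΓ).toIntLinearEquiv) (Sum.inr ⟨g, h⟩)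
        = psi G Γ (Finsupp.single (Sum.inr ⟨g, h⟩) 1) := by
      rw [← Module.Basis.repr_symm_single_one]
      rfl
    rw [hB, psi_single_one]
    rfl
end
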